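/- arXiv:1410.8580 — 11 statements merged into one kernel-verified Lean document; each statement's English description precedes it below -/
import Mathlib

section
/- Let K ≤ n, let μ_1, …, μ_K ∈ ℝ^n be linearly independent, let λ_1, …, λ_K > 0, set M = Σ_k λ_k μ_k μ_kᵀ and T = Σ_k λ_k μ_k ⊗ μ_k ⊗ μ_k. Let W = U D^{-1/2} be a whitening matrix for M (i.e., M = U D Uᵀ with U ∈ ℝ^{n×K} having orthonormal columns spanning the column space of M and D diagonal positive), and set μ̃_k = √λ_k Wᵀ μ_k. Then T(W, W, W) = Σ_{k=1}^K λ_k^{-1/2} μ̃_k ⊗ μ̃_k ⊗ μ̃_k, where the vectors μ̃_k are orthonormal; i.e., the whitened third-moment tensor is an orthogonal tensor of rank K. -/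
open Matrix

/-- **The whitened third-moment tensor is an orthogonal tensor of rank `K`.**
With `T = ∑ k, λ k • μ k ⊗ μ k ⊗ μ k`, `M = ∑ k, λ k • μ k μ kᵀ`, a whitening
matrix `W = U D^{-1/2}` for `M`, and `μ̃ k = √(λ k) • Wᵀ μ k`, one has
`T(W, W, W) = ∑ k, (λ k)^{-1/2} • μ̃ k ⊗ μ̃ k ⊗ μ̃ k`, with the `μ̃ k`
orthonormal. -/
theorem whitened_third_moment_is_orthogonal_tensor
    (n K : ℕ) (hKn : K ≤ n)
    (μ : Fin K → Fin n → ℝ) (hμ : LinearIndependent ℝ μ)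
    (lam : Fin K → ℝ) (hlam : ∀ k, 0 < lam k)
    (M : Matrix (Fin n) (Fin n) ℝ)
    (hM : M = ∑ k, lam k • vecMulVec (μ k) (μ k))
    (T : Fin n → Fin n → Fin n → ℝ)
    (hT : ∀ i j l, T i j l = ∑ k, lam k * μ k i * μ k j * μ k l)
    (U : Matrix (Fin n) (Fin K) ℝ) (hU : Uᵀ * U = 1)
    (dvec : Fin K → ℝ) (hdvec : ∀ k, 0 < dvec k)
    (hUDU : M = U * Matrix.diagonal dvec * Uᵀ)
    (hspan : Submodule.span ℝ (Set.range fun k => (fun i => U i k)) =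
      Submodule.span ℝ (Set.range fun j => (fun i => M i j)))
    (W : Matrix (Fin n) (Fin K) ℝ)
    (hW : W = U * Matrix.diagonal (fun k => (Real.sqrt (dvec k))⁻¹))
    (μt : Fin K → Fin K → ℝ)
    (hμt : ∀ k, μt k = Real.sqrt (lam k) • (Wᵀ).mulVec (μ k)) :
    (∀ i₁ i₂ i₃ : Fin K,
      (∑ j₁, ∑ j₂, ∑ j₃, T j₁ j₂ j₃ * W j₁ i₁ * W j₂ i₂ * W j₃ i₃) =
        ∑ k, (Real.sqrt (lam k))⁻¹ * μt k i₁ * μt k i₂ * μt k i₃) ∧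
    (∀ j k, μt j ⬝ᵥ μt k = if j = k then 1 else 0) := by
  have hsq : ∀ k, Real.sqrt (lam k) * Real.sqrt (lam k) = lam k :=
    fun k => Real.mul_self_sqrt (hlam k).le
  have hsne : ∀ k, Real.sqrt (lam k) ≠ 0 :=
    fun k => ne_of_gt (Real.sqrt_pos.mpr (hlam k))
  have hMe : ∀ a b, M a b = ∑ k, lam k * (μ k a * μ k b) := by
    intro a b
    rw [hM]
    simp [Matrix.sum_apply, vecMulVec_apply]
  have hμte : ∀ k i, μt k i = Real.sqrt (lam k) * ∑ a, W a i * μ k a := by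
    intro k i
    rw [hμt]
    simp [Matrix.mulVec, dotProduct, Matrix.transpose_apply]
  -- whitening property : Wᵀ M W = 1
  have hUU' : ∀ (X : Matrix (Fin K) (Fin K) ℝ), Uᵀ * (U * X) = X := by
    intro X
    rw [← Matrix.mul_assoc, hU, Matrix.one_mul]
  have hWMW : Wᵀ * M * W = 1 := by
    rw [hW, hUDU, Matrix.transpose_mul, Matrix.diagonal_transpose]
    simp only [Matrix.mul_assoc]
    rw [hUU', hUU', Matrix.diagonal_mul_diagonal, Matrix.diagonal_mul_diagonal]
    rw [show (fun k => (Real.sqrt (dvec k))⁻¹ * (dvec k * (Real.sqrt (dvec k))⁻¹)) = fun _ => (1:ℝ) from ?_,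
      Matrix.diagonal_one]
    funext k
    have h1 : Real.sqrt (dvec k) * Real.sqrt (dvec k) = dvec k :=
      Real.mul_self_sqrt (hdvec k).le
    have h2 : Real.sqrt (dvec k) ≠ 0 := ne_of_gt (Real.sqrt_pos.mpr (hdvec k))
    field_simp
    rw [sq, h1]
  -- the key orthonormality sum
  have key : ∀ i j, ∑ k, μt k i * μt k j = if i = j then (1:ℝ) else 0 := by
    intro i j
    have h1 : ∑ k, μt k i * μt k j
        = ∑ k, ∑ a, ∑ b, W a i * (lam k * (μ k a * μ k b)) * W b j := by
      refine Finset.sum_congr rfl fun k _ => ?_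
      calc μt k i * μt k j
          = lam k * ((∑ a, W a i * μ k a) * (∑ b, W b j * μ k b)) := by
            rw [hμte, hμte]
            linear_combination (∑ a, W a i * μ k a) * (∑ b, W b j * μ k b) * hsq k
        _ = ∑ a, ∑ b, lam k * ((W a i * μ k a) * (W b j * μ k b)) := by
            rw [Finset.sum_mul_sum]
            simp only [Finset.mul_sum]
        _ = ∑ a, ∑ b, W a i * (lam k * (μ k a * μ k b)) * W b j :=
            Finset.sum_congr rfl fun a _ => Finset.sum_congr rfl fun b _ => by ring
    have h2 : (Wᵀ * M * W) i j
        = ∑ b, ∑ a, ∑ k, W a i * (lam k * (μ k a * μ k b)) * W b j := by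
      simp only [Matrix.mul_apply, Matrix.transpose_apply, hMe]
      refine Finset.sum_congr rfl fun b _ => ?_
      rw [Finset.sum_mul]
      refine Finset.sum_congr rfl fun a _ => ?_
      rw [Finset.mul_sum, Finset.sum_mul]
    have h3 : ∑ b, ∑ a, ∑ k, W a i * (lam k * (μ k a * μ k b)) * W b j
        = ∑ k, ∑ a, ∑ b, W a i * (lam k * (μ k a * μ k b)) * W b j :=
      calc ∑ b, ∑ a, ∑ k, W a i * (lam k * (μ k a * μ k b)) * W b j
          = ∑ a, ∑ b, ∑ k, W a i * (lam k * (μ k a * μ k b)) * W b j :=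
            Finset.sum_comm
        _ = ∑ a, ∑ k, ∑ b, W a i * (lam k * (μ k a * μ k b)) * W b j :=
            Finset.sum_congr rfl fun a _ => Finset.sum_comm
        _ = ∑ k, ∑ a, ∑ b, W a i * (lam k * (μ k a * μ k b)) * W b j :=
            Finset.sum_comm
    rw [h1, ← h3, ← h2, hWMW]
    simp [Matrix.one_apply]
  constructor
  · intro i₁ i₂ i₃
    have hL : (∑ j₁, ∑ j₂, ∑ j₃, T j₁ j₂ j₃ * W j₁ i₁ * W j₂ i₂ * W j₃ i₃)
        = ∑ j₁, ∑ j₂, ∑ j₃, ∑ k,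
            lam k * μ k j₁ * μ k j₂ * μ k j₃ * W j₁ i₁ * W j₂ i₂ * W j₃ i₃ := by
      refine Finset.sum_congr rfl fun j₁ _ => Finset.sum_congr rfl fun j₂ _ =>
        Finset.sum_congr rfl fun j₃ _ => ?_
      rw [hT]
      simp only [Finset.sum_mul]
    have hswap : (∑ j₁, ∑ j₂, ∑ j₃, ∑ k,
            lam k * μ k j₁ * μ k j₂ * μ k j₃ * W j₁ i₁ * W j₂ i₂ * W j₃ i₃)
        = ∑ k, ∑ j₁, ∑ j₂, ∑ j₃,
            lam k * μ k j₁ * μ k j₂ * μ k j₃ * W j₁ i₁ * W j₂ i₂ * W j₃ i₃ :=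
      calc (∑ j₁, ∑ j₂, ∑ j₃, ∑ k,
              lam k * μ k j₁ * μ k j₂ * μ k j₃ * W j₁ i₁ * W j₂ i₂ * W j₃ i₃)
          = ∑ j₁, ∑ j₂, ∑ k, ∑ j₃,
              lam k * μ k j₁ * μ k j₂ * μ k j₃ * W j₁ i₁ * W j₂ i₂ * W j₃ i₃ :=
            Finset.sum_congr rfl fun _ _ => Finset.sum_congr rfl fun _ _ =>
              Finset.sum_comm
        _ = ∑ j₁, ∑ k, ∑ j₂, ∑ j₃,
              lam k * μ k j₁ * μ k j₂ * μ k j₃ * W j₁ i₁ * W j₂ i₂ * W j₃ i₃ :=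
            Finset.sum_congr rfl fun _ _ => Finset.sum_comm
        _ = ∑ k, ∑ j₁, ∑ j₂, ∑ j₃,
              lam k * μ k j₁ * μ k j₂ * μ k j₃ * W j₁ i₁ * W j₂ i₂ * W j₃ i₃ :=
            Finset.sum_comm
    rw [hL, hswap]
    refine Finset.sum_congr rfl fun k _ => ?_
    have h3 : (Real.sqrt (lam k))⁻¹ * Real.sqrt (lam k) = 1 :=
      inv_mul_cancel₀ (hsne k)
    calc (∑ j₁, ∑ j₂, ∑ j₃,
            lam k * μ k j₁ * μ k j₂ * μ k j₃ * W j₁ i₁ * W j₂ i₂ * W j₃ i₃)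
        = ∑ a, ∑ b, ∑ c,
            lam k * ((W a i₁ * μ k a) * ((W b i₂ * μ k b) * (W c i₃ * μ k c))) :=
          Finset.sum_congr rfl fun a _ => Finset.sum_congr rfl fun b _ =>
            Finset.sum_congr rfl fun c _ => by ring
      _ = lam k * ((∑ a, W a i₁ * μ k a) *
            ((∑ b, W b i₂ * μ k b) * (∑ c, W c i₃ * μ k c))) := by
          rw [Finset.sum_mul_sum, Finset.sum_mul_sum]
          simp only [Finset.mul_sum]
      _ = (Real.sqrt (lam k))⁻¹ * μt k i₁ * μt k i₂ * μt k i₃ := by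
          rw [hμte, hμte, hμte]
          linear_combination
            - ((∑ a, W a i₁ * μ k a) * (∑ b, W b i₂ * μ k b) *
              (∑ c, W c i₃ * μ k c)) * (Real.sqrt (lam k))^2 * h3
            - ((∑ a, W a i₁ * μ k a) * (∑ b, W b i₂ * μ k b) *
              (∑ c, W c i₃ * μ k c)) * hsq k
  · -- orthonormality of μt
    intro j k
    set B : Matrix (Fin K) (Fin K) ℝ := Matrix.of (fun k i => μt k i) with hB
    have hBtB : Bᵀ * B = 1 := by
      ext i j
      simp only [Matrix.mul_apply, Matrix.transpose_apply, hB, Matrix.of_apply,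
        Matrix.one_apply]
      exact key i j
    have hBBt : B * Bᵀ = 1 := mul_eq_one_comm.mp hBtB
    have := congrArg (fun A => A j k) hBBt
    simpa [Matrix.mul_apply, Matrix.transpose_apply, hB, Matrix.one_apply,
      dotProduct] using this
end

section
/- Let (Ω, ℱ, P) be a probability space, let Z : Ω → {1, …, K} be a random latent class with P(Z = k) = α_k where α_k > 0 and Σ_k α_k = 1, and let X¹, X², X³ : Ω → ℝ^n be integrable random vectors such that for every k, under the conditional probability measure P(· | Z = k), the vectors X¹, X², X³ are mutually independent and each has conditional mean E[Xⁱ | Z = k] = d_k ∈ ℝ^n. Then E[X¹ ⊗ X²] = Σ_{k=1}^K α_k d_k ⊗ d_k and E[X¹ ⊗ X² ⊗ X³] = Σ_{k=1}^K α_k d_k ⊗ d_k ⊗ d_k. -/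
open MeasureTheory ProbabilityTheory

/-- Decomposition of an integral over the partition given by `Z`. -/
lemma integral_decomp {Ω : Type*} [MeasurableSpace Ω] (P : Measure Ω) [IsProbabilityMeasure P]
    {K : ℕ} (Z : Ω → Fin K) (hZ : Measurable Z)
    (α : Fin K → ℝ) (hα : ∀ k, 0 < α k)
    (hPZ : ∀ k, P (Z ⁻¹' {k}) = ENNReal.ofReal (α k))
    (f : Ω → ℝ) (hf : Integrable f P) :
    (∫ ω, f ω ∂P) = ∑ k, α k * ∫ ω, f ω ∂(P[|Z ⁻¹' {k}]) := by
  have hmeas : ∀ k : Fin K, MeasurableSet (Z ⁻¹' {k}) :=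
    fun k => hZ (measurableSet_singleton k)
  have hdisj : Pairwise (Function.onFun Disjoint fun k : Fin K => Z ⁻¹' {k}) := by
    intro i j hij
    exact Set.disjoint_left.2 fun ω hi hj => hij (by
      simp only [Set.mem_preimage, Set.mem_singleton_iff] at hi hj
      rw [← hi, ← hj])
  have hunion : (⋃ k : Fin K, Z ⁻¹' {k}) = Set.univ := by
    ext ω; simp
  have hterm : ∀ k : Fin K,
      α k * (∫ ω, f ω ∂(P[|Z ⁻¹' {k}])) = ∫ ω in Z ⁻¹' {k}, f ω ∂P := by
    intro k
    rw [ProbabilityTheory.cond, integral_smul_measure, hPZ k]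
    rw [ENNReal.toReal_inv, ENNReal.toReal_ofReal (hα k).le]
    rw [smul_eq_mul, ← mul_assoc, mul_inv_cancel₀ (hα k).ne', one_mul]
  rw [Finset.sum_congr rfl fun k _ => hterm k]
  rw [← integral_iUnion_fintype hmeas hdisj (fun k => hf.integrableOn)]
  rw [hunion, setIntegral_univ]

/-- **Low-rank moment tensors from conditionally independent triplets.**
If `Z` is a latent class with `P(Z = k) = α k`, and `X 0, X 1, X 2` are
integrable random vectors that are mutually independent with common mean
`d k` under each conditional measure `P(· | Z = k)`, then
`E[X¹ ⊗ X²] = ∑ k, α k • d k ⊗ d k` and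
`E[X¹ ⊗ X² ⊗ X³] = ∑ k, α k • d k ⊗ d k ⊗ d k` (entrywise). -/
theorem mixture_moment_tensors
    {Ω : Type*} [MeasurableSpace Ω] (P : Measure Ω) [IsProbabilityMeasure P]
    (K n : ℕ) (Z : Ω → Fin K) (hZ : Measurable Z)
    (α : Fin K → ℝ) (hα : ∀ k, 0 < α k) (hαsum : ∑ k, α k = 1)
    (hPZ : ∀ k, P (Z ⁻¹' {k}) = ENNReal.ofReal (α k))
    (X : Fin 3 → Ω → Fin n → ℝ) (hX : ∀ i, Measurable (X i))
    (d : Fin K → Fin n → ℝ)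
    (hindep : ∀ k,
      iIndepFun X (P[|Z ⁻¹' {k}]))
    (hint : ∀ i j, ∀ k, Integrable (fun ω => X i ω j) (P[|Z ⁻¹' {k}]))
    (hmean : ∀ i k j, (∫ ω, X i ω j ∂(P[|Z ⁻¹' {k}])) = d k j)
    (hint2 : ∀ i j, Integrable (fun ω => X 0 ω i * X 1 ω j) P)
    (hint2' : ∀ i j k,
      Integrable (fun ω => X 0 ω i * X 1 ω j) (P[|Z ⁻¹' {k}]))
    (hint3 : ∀ i j l, Integrable (fun ω => X 0 ω i * X 1 ω j * X 2 ω l) P)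
    (hint3' : ∀ i j l k,
      Integrable (fun ω => X 0 ω i * X 1 ω j * X 2 ω l) (P[|Z ⁻¹' {k}])) :
    (∀ i j, (∫ ω, X 0 ω i * X 1 ω j ∂P) = ∑ k, α k * (d k i * d k j)) ∧
    (∀ i j l, (∫ ω, X 0 ω i * X 1 ω j * X 2 ω l ∂P) =
      ∑ k, α k * (d k i * d k j * d k l)) := by
  -- conditional second moment
  have h2 : ∀ i j k, (∫ ω, X 0 ω i * X 1 ω j ∂(P[|Z ⁻¹' {k}])) = d k i * d k j := by
    intro i j k
    have hIF : IndepFun (fun ω => X 0 ω i) (fun ω => X 1 ω j) (P[|Z ⁻¹' {k}]) := by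
      have := (hindep k).indepFun (i := 0) (j := 1) (by decide)
      exact this.comp (measurable_pi_apply i) (measurable_pi_apply j)
    have key := hIF.integral_mul_eq_mul_integral (hint 0 i k).aestronglyMeasurable (hint 1 j k).aestronglyMeasurable
    have : (∫ ω, X 0 ω i * X 1 ω j ∂(P[|Z ⁻¹' {k}])) =
        (∫ ω, X 0 ω i ∂(P[|Z ⁻¹' {k}])) * ∫ ω, X 1 ω j ∂(P[|Z ⁻¹' {k}]) := key
    rw [this, hmean 0 k i, hmean 1 k j]
  -- conditional third moment
  have h3 : ∀ i j l k, (∫ ω, X 0 ω i * X 1 ω j * X 2 ω l ∂(P[|Z ⁻¹' {k}])) =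
      d k i * d k j * d k l := by
    intro i j l k
    set c : Fin 3 → Fin n := ![i, j, l] with hc
    set f : Fin 3 → Ω → ℝ := fun m ω => X m ω (c m) with hf
    have hfm : ∀ m, Measurable (f m) := fun m => (measurable_pi_apply (c m)).comp (hX m)
    have hfi : iIndepFun f (P[|Z ⁻¹' {k}]) :=
      (hindep k).comp (fun m x => x (c m)) (fun m => measurable_pi_apply (c m))
    have hIF : IndepFun (f 0 * f 1) (f 2) (P[|Z ⁻¹' {k}]) :=
      hfi.indepFun_mul_left hfm 0 1 2 (by decide) (by decide)
    have key := hIF.integral_mul_eq_mul_integral (μ := P[|Z ⁻¹' {k}])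
      (hint2' i j k).aestronglyMeasurable (hint 2 l k).aestronglyMeasurable
    have : (∫ ω, X 0 ω i * X 1 ω j * X 2 ω l ∂(P[|Z ⁻¹' {k}])) =
        (∫ ω, X 0 ω i * X 1 ω j ∂(P[|Z ⁻¹' {k}])) * ∫ ω, X 2 ω l ∂(P[|Z ⁻¹' {k}]) := key
    rw [this, h2 i j k, hmean 2 k l]
  refine ⟨fun i j => ?_, fun i j l => ?_⟩
  · rw [integral_decomp P Z hZ α hα hPZ _ (hint2 i j)]
    exact Finset.sum_congr rfl fun k _ => by rw [h2 i j k]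
  · rw [integral_decomp P Z hZ α hα hPZ _ (hint3 i j l)]
    exact Finset.sum_congr rfl fun k _ => by rw [h3 i j l k]
end

section
/- (Critical points of the expected BCM update.) Let K = n, let d_1, …, d_K ∈ ℝ^n be linearly independent, and let α_1, …, α_K > 0 with Σ_k α_k = 1. For m ∈ ℝ^n set c_k(m) = ⟨m, d_k⟩, θ(m) = Σ_k α_k c_k(m)², and φ_k(m) = c_k(m)(c_k(m) − θ(m)). Then the expected update h(m) = Σ_k α_k φ_k(m) d_k vanishes if and only if there exists a subset S ⊆ {1, …, K} (possibly empty) such that c_k(m) = (Σ_{i∈S} α_i)^{-1} for all k ∈ S and c_k(m) = 0 for all k ∉ S. -/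
open Matrix

/-- **Critical points of the expected BCM update.**
With `K = n`, linearly independent `d k`, and `α k > 0` summing to `1`, the
expected BCM update `h(m) = ∑ k, α k c k (c k − θ) • d k` (with
`c k = ⟨m, d k⟩` and `θ = ∑ k, α k c k²`) vanishes iff there is a subset `S`
of the classes with `c k = (∑_{i ∈ S} α i)⁻¹` on `S` and `c k = 0` off `S`. -/
theorem bcm_expected_update_critical_points
    (n : ℕ) (d : Fin n → Fin n → ℝ) (hd : LinearIndependent ℝ d)
    (α : Fin n → ℝ) (hα : ∀ k, 0 < α k) (hαsum : ∑ k, α k = 1)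
    (m : Fin n → ℝ) :
    (∑ k, (α k * ((m ⬝ᵥ d k) *
        ((m ⬝ᵥ d k) - ∑ j, α j * (m ⬝ᵥ d j) ^ 2))) • d k) = 0 ↔
      ∃ S : Finset (Fin n),
        (∀ k ∈ S, m ⬝ᵥ d k = (∑ i ∈ S, α i)⁻¹) ∧
        (∀ k ∉ S, m ⬝ᵥ d k = 0) := by
  set c : Fin n → ℝ := fun k => m ⬝ᵥ d k with hc
  set θ : ℝ := ∑ j, α j * c j ^ 2 with hθ
  constructor
  · intro h
    have hzero : ∀ k, α k * (c k * (c k - θ)) = 0 :=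
      Fintype.linearIndependent_iff.mp hd _ h
    have hco : ∀ k, c k = 0 ∨ c k = θ := by
      intro k
      rcases mul_eq_zero.mp (hzero k) with h1 | h1
      · exact absurd h1 (hα k).ne'
      · rcases mul_eq_zero.mp h1 with h2 | h2
        · exact Or.inl h2
        · exact Or.inr (by linarith)
    set S := Finset.univ.filter (fun k => c k ≠ 0) with hS
    have hmemS : ∀ k, k ∈ S ↔ c k ≠ 0 := by
      intro k; simp [hS]
    have hθeq : θ = (∑ i ∈ S, α i) * θ ^ 2 := by
      calc θ = ∑ j ∈ S, α j * c j ^ 2 := by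
              refine (Finset.sum_subset S.subset_univ fun j _ hj => ?_).symm
              have h0 : c j = 0 := by
                by_contra hne; exact hj ((hmemS j).mpr hne)
              rw [h0]; ring
        _ = ∑ j ∈ S, α j * θ ^ 2 := by
              refine Finset.sum_congr rfl fun j hj => ?_
              rcases hco j with h0 | h0
              · exact absurd h0 ((hmemS j).mp hj)
              · rw [h0]
        _ = (∑ i ∈ S, α i) * θ ^ 2 := by rw [Finset.sum_mul]
    rcases S.eq_empty_or_nonempty with hSe | ⟨k₀, hk₀⟩
    · refine ⟨∅, fun k hk => absurd hk (Finset.notMem_empty k), fun k _ => ?_⟩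
      show c k = 0
      by_contra hne
      have : k ∈ S := (hmemS k).mpr hne
      rw [hSe] at this
      exact Finset.notMem_empty k this
    · have hθne : θ ≠ 0 := by
        have hk0 : c k₀ ≠ 0 := (hmemS k₀).mp hk₀
        rcases hco k₀ with h0 | h0
        · exact absurd h0 hk0
        · rw [← h0]; exact hk0
      have hAθ : (∑ i ∈ S, α i) * θ = 1 := by
        have hmul : θ * 1 = θ * ((∑ i ∈ S, α i) * θ) := by
          rw [mul_one]; nlinarith [hθeq]
        exact (mul_left_cancel₀ hθne hmul).symm
      have hθinv : θ = (∑ i ∈ S, α i)⁻¹ := eq_inv_of_mul_eq_one_right hAθ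
      refine ⟨S, fun k hk => ?_, fun k hk => ?_⟩
      · show c k = (∑ i ∈ S, α i)⁻¹
        rcases hco k with h0 | h0
        · exact absurd h0 ((hmemS k).mp hk)
        · exact h0.trans hθinv
      · show c k = 0
        by_contra hne
        exact hk ((hmemS k).mpr hne)
  · rintro ⟨S, h1', h2'⟩
    have h1 : ∀ k ∈ S, c k = (∑ i ∈ S, α i)⁻¹ := h1'
    have h2 : ∀ k ∉ S, c k = 0 := h2'
    have key : ∀ k, α k * (c k * (c k - θ)) = 0 := by
      rcases S.eq_empty_or_nonempty with rfl | hne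
      · intro k
        rw [h2 k (Finset.notMem_empty k)]; ring
      · have hApos : 0 < ∑ i ∈ S, α i := Finset.sum_pos (fun i _ => hα i) hne
        have hθA : θ = (∑ i ∈ S, α i)⁻¹ := by
          calc θ = ∑ j ∈ S, α j * c j ^ 2 := by
                  refine (Finset.sum_subset S.subset_univ fun j _ hj => ?_).symm
                  rw [h2 j hj]; ring
            _ = (∑ i ∈ S, α i) * ((∑ i ∈ S, α i)⁻¹) ^ 2 := by
                  rw [Finset.sum_mul]
                  exact Finset.sum_congr rfl fun j hj => by rw [h1 j hj]
            _ = (∑ i ∈ S, α i)⁻¹ := by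
                  field_simp
        intro k
        by_cases hk : k ∈ S
        · rw [h1 k hk, hθA]; ring
        · rw [h2 k hk]; ring
    exact Finset.sum_eq_zero fun k _ => by rw [key k, zero_smul]
end

section
/- (Jacobian of the BCM update at a critical point.) Let α_1, …, α_K > 0 with Σ_k α_k = 1. For c ∈ ℝ^K define Φ(c) ∈ ℝ^K by Φ_k(c) = c_k(c_k − θ(c)) with θ(c) = Σ_j α_j c_j². Let S ⊆ {1, …, K} be nonempty, β = (Σ_{i∈S} α_i)^{-1}, and let c* ∈ ℝ^K be given by c*_k = β for k ∈ S and c*_k = 0 for k ∉ S. Then the Jacobian matrix of Φ at c* equals β I_S − β I_{S^c} − 2β² diag(α) 𝟙_S 𝟙_Sᵀ, where I_S is the diagonal 0/1 matrix with (I_S)_{ii} = 1 iff i ∈ S, diag(α) is the diagonal matrix with entries α_i, and 𝟙_S ∈ ℝ^K is the indicator vector of S. -/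
open Matrix

/-- **Jacobian of the BCM nonlinearity at a critical point.**
With `Φ k (c) = c k (c k − θ(c))`, `θ(c) = ∑ j, α j c j²`, `S` nonempty,
`β = (∑_{i∈S} α i)⁻¹` and `c*` equal to `β` on `S` and `0` off `S`, the
Jacobian matrix of `Φ` at `c*` is `β I_S − β I_{Sᶜ} − 2β² diag(α) 𝟙_S 𝟙_Sᵀ`
(so that the derivative of `Φ` at `c*` in direction `v` is `v ᵥ* J`,
i.e. `J k j = ∂Φ j / ∂c k`, the convention under which the displayed
matrix is the Jacobian). -/
theorem bcm_jacobian_at_critical_point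
    (K : ℕ) (α : Fin K → ℝ) (hα : ∀ k, 0 < α k) (hαsum : ∑ k, α k = 1)
    (Φ : (Fin K → ℝ) → (Fin K → ℝ))
    (hΦ : ∀ c k, Φ c k = c k * (c k - ∑ j, α j * c j ^ 2))
    (S : Finset (Fin K)) (hS : S.Nonempty)
    (β : ℝ) (hβ : β = (∑ i ∈ S, α i)⁻¹)
    (cstar : Fin K → ℝ)
    (hcstar : ∀ k, cstar k = if k ∈ S then β else 0)
    (oneS : Fin K → ℝ) (honeS : ∀ k, oneS k = if k ∈ S then 1 else 0)
    (IS ISc : Matrix (Fin K) (Fin K) ℝ)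
    (hIS : IS = Matrix.diagonal oneS)
    (hISc : ISc = Matrix.diagonal (fun k => if k ∈ S then 0 else 1)) :
    HasFDerivAt Φ
      (LinearMap.toContinuousLinearMap (Matrix.vecMulLinear
        (β • IS - β • ISc -
          (2 * β ^ 2) • (Matrix.diagonal α * vecMulVec oneS oneS))))
      cstar := by
  have hsne : (∑ i ∈ S, α i) ≠ 0 :=
    ne_of_gt (Finset.sum_pos (fun i _ => hα i) hS)
  have hθc : ∑ j, α j * cstar j ^ 2 = β := by
    have h1 : ∀ j, α j * cstar j ^ 2 = if j ∈ S then α j * β ^ 2 else 0 := by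
      intro j; rw [hcstar]; split_ifs <;> ring
    rw [Finset.sum_congr rfl fun j _ => h1 j, Finset.sum_ite_mem,
      Finset.univ_inter, ← Finset.sum_mul, hβ, sq, ← mul_assoc,
      mul_inv_cancel₀ hsne, one_mul]
  apply hasFDerivAt_pi''
  intro k
  have hfun : (fun c : Fin K → ℝ => Φ c k)
      = fun c => c k * (c k - ∑ j, α j * (c j * c j)) := by
    funext c; simp only [hΦ, pow_two]
  rw [hfun]
  have hθ : HasFDerivAt (fun c : Fin K → ℝ => ∑ j, α j * (c j * c j))
      (∑ j, (2 * α j * cstar j) • (ContinuousLinearMap.proj j :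
        (Fin K → ℝ) →L[ℝ] ℝ)) cstar := by
    apply HasFDerivAt.fun_sum
    intro j _
    have h1 := (hasFDerivAt_apply (𝕜 := ℝ) j cstar).fun_mul
      (hasFDerivAt_apply (𝕜 := ℝ) j cstar)
    have h2 := h1.const_mul (α j)
    refine h2.congr_fderiv (Eq.symm ?_)
    refine ContinuousLinearMap.ext fun v => ?_
    simp only [ContinuousLinearMap.smul_apply, ContinuousLinearMap.add_apply,
      ContinuousLinearMap.proj_apply, smul_eq_mul]
    ring
  have hk := hasFDerivAt_apply (𝕜 := ℝ) k cstar
  have hmul := hk.fun_mul (hk.fun_sub hθ)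
  refine hmul.congr_fderiv (Eq.symm ?_)
  refine ContinuousLinearMap.ext fun v => ?_
  simp only [ContinuousLinearMap.comp_apply, LinearMap.coe_toContinuousLinearMap',
    Matrix.vecMulLinear_apply, ContinuousLinearMap.proj_apply,
    ContinuousLinearMap.add_apply, ContinuousLinearMap.smul_apply,
    ContinuousLinearMap.sub_apply, ContinuousLinearMap.sum_apply, smul_eq_mul]
  have hc2 : ∑ j, α j * (cstar j * cstar j) = β := by
    rw [← hθc]; exact Finset.sum_congr rfl fun j _ => by ring
  rw [hc2]
  simp only [Matrix.vecMul, dotProduct, hIS, hISc, Matrix.sub_apply,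
    Matrix.smul_apply, Matrix.diagonal_mul, Matrix.vecMulVec_apply,
    Matrix.diagonal_apply, smul_eq_mul, mul_sub, Finset.sum_sub_distrib,
    Finset.mul_sum, mul_ite, ite_mul, mul_zero, zero_mul, mul_one,
    Finset.sum_ite_eq', Finset.mem_univ, if_true]
  by_cases hk : k ∈ S
  · simp only [hcstar, honeS, hk, if_true]
    have h3 : ∀ x : Fin K, v x * (2 * β ^ 2 * (α x * ((if x ∈ S then 1 else 0) * 1)))
        = β * ((2 * α x * if x ∈ S then β else 0) * v x) := fun x => by
      split_ifs <;> ring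
    rw [Finset.sum_congr rfl fun x _ => h3 x]
    ring
  · simp only [hcstar, honeS, hk, if_false]
    simp only [mul_zero, zero_mul, Finset.sum_const_zero]
    ring
end

section
/- Let α_1, …, α_K > 0, let S ⊆ {1, …, K} with |S| ≥ 2, suppose the values {α_i : i ∈ S} are not all equal, and set β = (Σ_{i∈S} α_i)^{-1}. Then the matrix A = I_S − 2β diag(α) 𝟙_S 𝟙_Sᵀ is not negative semidefinite: for j ∈ S minimizing α_j over S, one has 2βα_j < 1 and hence e_jᵀ A e_j = 1 − 2βα_j > 0. Consequently the critical points of the expected BCM update whose support S has size at least 2 are not stable. -/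
open Matrix

/-- **Non-selective critical points are unstable.**
For `S` with at least two elements on which the `α i` are not all equal, and
`β = (∑_{i∈S} α i)⁻¹`, the matrix `A = I_S − 2β diag(α) 𝟙_S 𝟙_Sᵀ` is not
negative semidefinite: for `j ∈ S` minimizing `α` over `S` one has
`2βα_j < 1`, `e_jᵀ A e_j = 1 − 2βα_j`, and hence `e_jᵀ A e_j > 0`. -/
theorem nonselective_critical_points_unstable
    (K : ℕ) (α : Fin K → ℝ) (hα : ∀ k, 0 < α k)
    (S : Finset (Fin K)) (hScard : 2 ≤ S.card)
    (hne : ∃ i ∈ S, ∃ j ∈ S, α i ≠ α j)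
    (β : ℝ) (hβ : β = (∑ i ∈ S, α i)⁻¹)
    (oneS : Fin K → ℝ) (honeS : ∀ k, oneS k = if k ∈ S then 1 else 0)
    (A : Matrix (Fin K) (Fin K) ℝ)
    (hA : A = Matrix.diagonal oneS -
      (2 * β) • (Matrix.diagonal α * vecMulVec oneS oneS))
    (j : Fin K) (hj : j ∈ S) (hjmin : ∀ i ∈ S, α j ≤ α i) :
    2 * β * α j < 1 ∧
    (Pi.single j 1 ⬝ᵥ A.mulVec (Pi.single j 1)) = 1 - 2 * β * α j ∧
    0 < (Pi.single j 1 ⬝ᵥ A.mulVec (Pi.single j 1)) ∧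
    ¬ (∀ v : Fin K → ℝ, v ⬝ᵥ A.mulVec v ≤ 0) := by
  -- there exists i₀ ∈ S with α j < α i₀
  obtain ⟨a, ha, b, hb, hab⟩ := hne
  have hex : ∃ i₀ ∈ S, α j < α i₀ := by
    rcases lt_or_ge (α j) (α a) with h | h
    · exact ⟨a, ha, h⟩
    · refine ⟨b, hb, ?_⟩
      have hja : α j = α a := le_antisymm (hjmin a ha) h
      have := hjmin b hb
      rcases this.lt_or_eq with h' | h'
      · exact h'
      · exact absurd (hja ▸ h'.symm) (Ne.symm hab)
  obtain ⟨i₀, hi₀, hlt⟩ := hex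
  have hij : i₀ ≠ j := fun h => absurd (h ▸ hlt) (lt_irrefl _)
  have hsum : α j + α i₀ ≤ ∑ i ∈ S, α i := by
    have hsub : ({j, i₀} : Finset (Fin K)) ⊆ S := by
      intro x hx
      simp only [Finset.mem_insert, Finset.mem_singleton] at hx
      rcases hx with rfl | rfl <;> assumption
    calc α j + α i₀ = ∑ i ∈ ({j, i₀} : Finset (Fin K)), α i := by
          rw [Finset.sum_pair (Ne.symm hij)]
      _ ≤ ∑ i ∈ S, α i :=
          Finset.sum_le_sum_of_subset_of_nonneg hsub (fun i _ _ => (hα i).le)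
  have hSpos : 0 < ∑ i ∈ S, α i :=
    lt_of_lt_of_le (by linarith [hα j, hα i₀]) hsum
  have h2 : 2 * α j < ∑ i ∈ S, α i := by linarith
  have h1 : 2 * β * α j < 1 := by
    rw [hβ]
    rw [show 2 * (∑ i ∈ S, α i)⁻¹ * α j = (2 * α j) / (∑ i ∈ S, α i) by ring]
    rw [div_lt_one hSpos]
    exact h2
  have hquad : (Pi.single j 1 ⬝ᵥ A.mulVec (Pi.single j 1)) = 1 - 2 * β * α j := by
    rw [hA]
    simp [mulVec_single, single_dotProduct, Matrix.sub_apply, Matrix.smul_apply,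
      Matrix.diagonal_apply_eq, Matrix.mul_apply, vecMulVec_apply, honeS, hj,
      Finset.sum_ite_eq, mul_comm]
    left
    simp [Matrix.diagonal_apply, Finset.sum_ite_eq, hj]
  refine ⟨h1, hquad, by rw [hquad]; linarith, fun h => ?_⟩
  have := h (Pi.single j 1)
  rw [hquad] at this
  linarith
end

section
/- Let K = n, let d_1, …, d_K ∈ ℝ^n be linearly independent, let α_1, …, α_K > 0 with Σ_k α_k = 1, and let Φ(c)_k = c_k(c_k − Σ_j α_j c_j²). Fix i and let c* = α_i^{-1} e_i. Then the Jacobian of Φ at c* equals −α_i^{-1} I_K, and consequently the Jacobian of the expected BCM update H = Dᵀ P (∂Φ/∂c) D evaluated at the corresponding weight vector m* = α_i^{-1} D^{-1} e_i equals −α_i^{-1} Dᵀ P D, which is negative definite. Hence each selective critical point c* = α_i^{-1} e_i is a stable point of the expected BCM update. -/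
open Matrix

/-- **Selective critical points are stable.**
With `K = n`, linearly independent rows `d k` of `D`, `P = diag α`, and
`c* = α_i⁻¹ e_i`, the Jacobian of `Φ` at `c*` is `−α_i⁻¹ I`, the weight
vector `m* = α_i⁻¹ D⁻¹ e_i` satisfies `D m* = c*`, and the Jacobian of the
expected BCM update `H = Dᵀ P (∂Φ/∂c) D` at `m*` equals `−α_i⁻¹ Dᵀ P D`,
which is negative definite. -/
theorem bcm_selective_points_stable
    (n : ℕ) (d : Fin n → Fin n → ℝ) (hd : LinearIndependent ℝ d)
    (α : Fin n → ℝ) (hα : ∀ k, 0 < α k) (hαsum : ∑ k, α k = 1)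
    (Φ : (Fin n → ℝ) → (Fin n → ℝ))
    (hΦ : ∀ c k, Φ c k = c k * (c k - ∑ j, α j * c j ^ 2))
    (D : Matrix (Fin n) (Fin n) ℝ) (hD : D = Matrix.of d)
    (P : Matrix (Fin n) (Fin n) ℝ) (hP : P = Matrix.diagonal α)
    (i : Fin n)
    (cstar : Fin n → ℝ) (hcstar : cstar = (α i)⁻¹ • (Pi.single i 1 : Fin n → ℝ))
    (mstar : Fin n → ℝ) (hmstar : mstar = (α i)⁻¹ • D⁻¹.mulVec (Pi.single i 1)) :
    HasFDerivAt Φ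
      (LinearMap.toContinuousLinearMap (Matrix.mulVecLin
        (-(α i)⁻¹ • (1 : Matrix (Fin n) (Fin n) ℝ)))) cstar ∧
    D.mulVec mstar = cstar ∧
    Dᵀ * P * (-(α i)⁻¹ • (1 : Matrix (Fin n) (Fin n) ℝ)) * D =
      -(α i)⁻¹ • (Dᵀ * P * D) ∧
    (∀ v : Fin n → ℝ, v ≠ 0 →
      v ⬝ᵥ (-(α i)⁻¹ • (Dᵀ * P * D)).mulVec v < 0) := by
  have hαi := hα i
  have hαine : α i ≠ 0 := (hα i).ne'
  have hUnit : IsUnit D := by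
    rw [hD]
    exact linearIndependent_rows_iff_isUnit.mp hd
  have hΦeq : Φ = fun c k => c k * (c k - ∑ j, α j * c j ^ 2) := by
    funext c k; exact hΦ c k
  refine ⟨?_, ?_, ?_, ?_⟩
  · -- derivative
    subst hΦeq
    rw [hasFDerivAt_pi']
    intro k
    have hS : HasFDerivAt (fun c : Fin n → ℝ => ∑ j, α j * c j ^ 2)
        (∑ j : Fin n, (α j * (2 * cstar j)) • (ContinuousLinearMap.proj (R := ℝ) (φ := fun _ : Fin n => ℝ) j :
          (Fin n → ℝ) →L[ℝ] ℝ)) cstar := by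
      apply HasFDerivAt.fun_sum
      intro j _
      have h1 : HasFDerivAt (fun c : Fin n → ℝ => c j)
          (ContinuousLinearMap.proj (R := ℝ) (φ := fun _ : Fin n => ℝ) j) cstar := by
        exact (ContinuousLinearMap.proj (R := ℝ) (φ := fun _ : Fin n => ℝ) j).hasFDerivAt
      simp only [pow_two]
      have h2 := (h1.mul h1).const_mul (α j)
      convert h2 using 1
      · rfl
      · rfl
      ext v
      simp [smul_smul]
      ring
    have hk : HasFDerivAt (fun c : Fin n → ℝ => c k)
        (ContinuousLinearMap.proj (R := ℝ) (φ := fun _ : Fin n => ℝ) k) cstar := by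
      exact (ContinuousLinearMap.proj (R := ℝ) (φ := fun _ : Fin n => ℝ) k).hasFDerivAt
    have hmul := hk.mul (hk.sub hS)
    convert hmul using 1
    · rfl
    · rfl
    ext v
    have hcs : ∀ j, cstar j = (α i)⁻¹ * (if j = i then 1 else 0) := by
      intro j; rw [hcstar]; simp [Pi.single_apply]
    have hsum1 : ∑ j, α j * cstar j ^ 2 = (α i)⁻¹ := by
      rw [Finset.sum_eq_single i]
      · rw [hcs i, if_pos rfl, mul_one]; field_simp
      · intro j _ hj; rw [hcs j]; simp [hj]
      · simp
    have hsum2 : ∑ j, α j * (2 * cstar j) * v j = 2 * v i := by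
      rw [Finset.sum_eq_single i]
      · rw [hcs i, if_pos rfl]; field_simp
      · intro j _ hj; rw [hcs j]; simp [hj]
      · simp
    simp only [ContinuousLinearMap.coe_comp', Function.comp_apply]
    simp only [ContinuousLinearMap.add_apply, ContinuousLinearMap.smul_apply,
      ContinuousLinearMap.sub_apply, ContinuousLinearMap.proj_apply,
      ContinuousLinearMap.sum_apply, LinearMap.coe_toContinuousLinearMap',
      Matrix.mulVecLin_apply, smul_eq_mul, Matrix.smul_mulVec,
      Matrix.neg_mulVec, Matrix.one_mulVec, Pi.neg_apply, Pi.smul_apply, neg_smul, Pi.sub_apply]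
    rw [hsum1, hsum2]
    rcases eq_or_ne k i with h | h
    · subst h; rw [hcs k]; simp only [if_pos rfl, mul_one]; ring
    · rw [hcs k]; simp only [if_neg h, mul_zero]; ring
  · -- D mstar = cstar
    rw [hmstar, hcstar, Matrix.mulVec_smul, Matrix.mulVec_mulVec,
      Matrix.mul_nonsing_inv D ((Matrix.isUnit_iff_isUnit_det D).mp hUnit)]
    ext k
    simp [Matrix.one_mulVec, Matrix.one_apply, Pi.single_apply, eq_comm]
  · ext k l
    simp [Matrix.mul_smul, Matrix.smul_mul, Matrix.mul_one]
  · intro v hv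
    have hDv : D.mulVec v ≠ 0 := by
      intro h
      exact hv (Matrix.mulVec_injective_iff_isUnit.2 hUnit (h.trans (Matrix.mulVec_zero D).symm))
    have key : v ⬝ᵥ (Dᵀ * P * D).mulVec v = ∑ k, α k * (D.mulVec v k)^2 := by
      rw [← Matrix.mulVec_mulVec, ← Matrix.mulVec_mulVec, Matrix.dotProduct_mulVec,
        Matrix.vecMul_transpose, hP]
      simp only [dotProduct, Matrix.mulVec_diagonal, sq]
      exact Finset.sum_congr rfl fun x _ => by ring
    have hpos : 0 < v ⬝ᵥ (Dᵀ * P * D).mulVec v := by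
      rw [key]
      obtain ⟨k, hk⟩ := Function.ne_iff.1 hDv
      apply Finset.sum_pos' (fun j _ => mul_nonneg (hα j).le (sq_nonneg _))
      exact ⟨k, Finset.mem_univ k, mul_pos (hα k) (sq_pos_of_ne_zero hk)⟩
    rw [Matrix.smul_mulVec, dotProduct_smul, smul_eq_mul]
    have : 0 < (α i)⁻¹ := by positivity
    nlinarith
end

section
/- (Deterministic core of Delyon's stochastic approximation theorem.) Let 𝒪 ⊆ ℝ^d be open, let V : 𝒪 → [0, ∞) be continuously differentiable with V(x) → +∞ as x → ∂𝒪 or |x| → ∞, let 𝒦 ⊂ 𝒪 be a finite set, and let h : 𝒪 → ℝ^d be continuous with ⟨∇V(x), h(x)⟩ < 0 for all x ∈ 𝒪 \ 𝒦. Let γ_n > 0 satisfy Σ_n γ_n = ∞ and Σ_n γ_n² < ∞, and let (m_n) ⊂ 𝒪 satisfy m_n = m_{n-1} + γ_n h(m_{n-1}) + γ_n η_n with η_n = e_n + r_n, where the series Σ_n γ_n e_n converges in ℝ^d, r_n → 0, and the sequence (m_n) remains in a fixed compact subset of 𝒪. Then V(m_n) converges to an element of V(𝒦) and dist(m_n,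 𝒦) → 0. -/
open Filter Topology RealInnerProductSpace

set_option maxHeartbeats 1000000

section AuxiliaryLemmas

lemma aux_sum_le {f w : ℕ → ℝ} {a b : ℕ} (hab : a ≤ b)
    (h : ∀ j, a ≤ j → j < b → f (j + 1) ≤ f j + w j) :
    f b ≤ f a + ∑ j ∈ Finset.Ico a b, w j := by
  induction b, hab using Nat.le_induction with
  | base => simp
  | succ n hn ih =>
    have h1 : f (n + 1) ≤ f n + w n := h n hn (Nat.lt_succ_self n)
    have h2 := ih (fun j hj hj' => h j hj (hj'.trans (Nat.lt_succ_self n)))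
    rw [Finset.sum_Ico_succ_top hn]
    linarith

lemma aux_dist_le {E : Type*} [PseudoMetricSpace E] (x : ℕ → E) {a b : ℕ} (hab : a ≤ b) :
    dist (x b) (x a) ≤ ∑ j ∈ Finset.Ico a b, dist (x (j + 1)) (x j) := by
  induction b, hab using Nat.le_induction with
  | base => simp
  | succ n hn ih =>
    rw [Finset.sum_Ico_succ_top hn]
    calc dist (x (n+1)) (x a) ≤ dist (x (n+1)) (x n) + dist (x n) (x a) := dist_triangle _ _ _
    _ ≤ _ := by linarith

lemma aux_gap {E : Type*} [MetricSpace E] {K : Set E} (hK : K.Finite) :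
    ∃ ρ > 0, ∀ k ∈ K, ∀ k' ∈ K, k ≠ k' → ρ ≤ dist k k' := by
  classical
  set T : Finset ℝ := ((hK.toFinset ×ˢ hK.toFinset).filter fun p => p.1 ≠ p.2).image
      fun p => dist p.1 p.2 with hT
  by_cases hTne : T.Nonempty
  · refine ⟨T.min' hTne, ?_, ?_⟩
    · obtain ⟨p, hp, hpd⟩ := Finset.mem_image.mp (T.min'_mem hTne)
      rw [Finset.mem_filter] at hp
      rw [← hpd]
      exact dist_pos.mpr hp.2
    · intro k hk k' hk' hne
      refine T.min'_le _ ?_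
      refine Finset.mem_image.mpr ⟨(k, k'), ?_, rfl⟩
      simp [Finset.mem_filter, Finset.mem_product, hK.mem_toFinset.mpr hk,
        hK.mem_toFinset.mpr hk', hne]
  · refine ⟨1, one_pos, ?_⟩
    intro k hk k' hk' hne
    exfalso
    exact hTne ⟨dist k k', Finset.mem_image.mpr ⟨(k, k'), by
      simp [Finset.mem_filter, Finset.mem_product, hK.mem_toFinset.mpr hk,
        hK.mem_toFinset.mpr hk', hne], rfl⟩⟩

lemma aux_gap_real {S : Set ℝ} (hS : S.Finite) :
    ∃ ρ > 0, ∀ u ∈ S, ∀ v ∈ S, u ≠ v → ρ ≤ |u - v| := by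
  obtain ⟨ρ, hρ, hρ'⟩ := aux_gap hS
  exact ⟨ρ, hρ, fun u hu v hv hne => by simpa [Real.dist_eq] using hρ' u hu v hv hne⟩

lemma aux_diverge {V γ : ℕ → ℝ} (hγpos : ∀ n, 0 < γ n)
    (hdiv : Tendsto (fun N => ∑ n ∈ Finset.range N, γ n) atTop atTop)
    {c : ℝ} (hc : 0 < c) {N : ℕ}
    (hstep : ∀ n, N ≤ n → V (n + 1) ≤ V n - γ (n + 1) * c)
    (hnn : ∀ n, N ≤ n → 0 ≤ V n) : False := by
  have key : ∀ n, N ≤ n → V n ≤ V N - c * ∑ j ∈ Finset.Ico N n, γ (j + 1) := by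
    intro n hn
    have := aux_sum_le (f := V) (w := fun j => -(γ (j + 1) * c)) hn
      (fun j hj _ => by simpa using (by linarith [hstep j hj] :
        V (j + 1) ≤ V j + -(γ (j + 1) * c)))
    rw [Finset.sum_neg_distrib] at this
    rw [Finset.mul_sum]
    have heq : ∑ j ∈ Finset.Ico N n, γ (j+1) * c = ∑ j ∈ Finset.Ico N n, c * γ (j+1) :=
      Finset.sum_congr rfl fun j _ => mul_comm _ _
    linarith [heq ▸ this]
  have h1 : ∀ n, N ≤ n → ∑ j ∈ Finset.Ico N n, γ (j + 1) =
      ∑ j ∈ Finset.range (n + 1), γ j - ∑ j ∈ Finset.range (N + 1), γ j := by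
    intro n hn
    induction n, hn using Nat.le_induction with
    | base => simp
    | succ n hn ih =>
      rw [Finset.sum_Ico_succ_top hn, Finset.sum_range_succ (n := n + 1), ih]
      ring
  have hdiv2 : Tendsto (fun n => ∑ j ∈ Finset.Ico N n, γ (j + 1)) atTop atTop := by
    apply Tendsto.congr' (f₁ := fun n =>
      ∑ j ∈ Finset.range (n + 1), γ j - ∑ j ∈ Finset.range (N + 1), γ j)
    · filter_upwards [eventually_ge_atTop N] with n hn using (h1 n hn).symm
    · exact tendsto_atTop_add_const_right _ _ (hdiv.comp (tendsto_add_atTop_nat 1))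
  obtain ⟨n, hn1, hn2⟩ := ((hdiv2.eventually_ge_atTop ((V N + 1) / c)).and
    (eventually_ge_atTop N)).exists
  have := key n hn2
  have h3 : V N + 1 ≤ c * ∑ j ∈ Finset.Ico N n, γ (j + 1) := by
    rw [div_le_iff₀ hc] at hn1; linarith [hn1]
  linarith [hnn n hn2]

lemma aux_pigeonhole {E : Type*} [MetricSpace E] {K : Set E} (hKfin : K.Finite)
    (hKne : K.Nonempty) {x : ℕ → E} {ε : ℝ}
    (h : ∀ᶠ n in atTop, Metric.infDist (x n) K < ε) :
    ∃ k ∈ K, ∃ᶠ n in atTop, dist (x n) k < ε := by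
  by_contra hcon
  push_neg at hcon
  have h2 : ∀ᶠ n in atTop, ∀ k ∈ K, ¬ dist (x n) k < ε := by
    rw [eventually_all_finite hKfin]
    intro k hk
    have := hcon k hk
    replace this := this.mono fun n hn => not_lt.mpr hn
    filter_upwards [this] with n hn using hn
  obtain ⟨n, hn1, hn2⟩ := (h.and h2).exists
  obtain ⟨k, hk, hkd⟩ := (Metric.infDist_lt_iff hKne).mp hn1
  exact hn2 k hk hkd

lemma aux_B2 {E : Type*} [MetricSpace E] {K : Set E} (hKfin : K.Finite) (hKne : K.Nonempty)
    {x : ℕ → E} (hstep0 : Tendsto (fun n => dist (x (n + 1)) (x n)) atTop (𝓝 0))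
    (hd : Tendsto (fun n => Metric.infDist (x n) K) atTop (𝓝 0)) :
    ∃ k ∈ K, Tendsto x atTop (𝓝 k) := by
  obtain ⟨ρ, hρ, hρsep⟩ := aux_gap hKfin
  set ε₀ := ρ / 3 with hε₀
  have hε₀pos : 0 < ε₀ := by positivity
  have key : ∀ ε', 0 < ε' → ε' ≤ ε₀ → ∃ k ∈ K, ∀ᶠ n in atTop, dist (x n) k < ε' := by
    intro ε' hε' hε'le
    have hev : ∀ᶠ n in atTop, Metric.infDist (x n) K < ε' ∧
        dist (x (n + 1)) (x n) < ρ - 2 * ε₀ := by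
      have h1 := (Metric.tendsto_nhds.mp hd (ε') hε')
      have h2 := (Metric.tendsto_nhds.mp hstep0 (ρ - 2 * ε₀) (by rw [hε₀]; linarith))
      filter_upwards [h1, h2] with n hn1 hn2
      constructor
      · rw [Real.dist_eq, abs_sub_lt_iff] at hn1; linarith [hn1.1]
      · rw [Real.dist_eq, abs_sub_lt_iff] at hn2; linarith [hn2.1]
    obtain ⟨N, hN⟩ := eventually_atTop.mp hev
    obtain ⟨k, hk, hkfreq⟩ := aux_pigeonhole hKfin hKne (hev.mono fun n hn => hn.1)
    obtain ⟨n₁, hn₁d, hn₁N⟩ := (hkfreq.and_eventually (eventually_ge_atTop N)).exists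
    refine ⟨k, hk, eventually_atTop.mpr ⟨n₁, ?_⟩⟩
    intro n hn
    induction n, hn using Nat.le_induction with
    | base => exact hn₁d
    | succ n hn ih =>
      have hnN : N ≤ n := le_trans hn₁N hn
      obtain ⟨hd1, _⟩ := hN (n + 1) (by omega)
      obtain ⟨k', hk', hk'd⟩ := (Metric.infDist_lt_iff hKne).mp hd1
      rcases eq_or_ne k' k with rfl | hne
      · exact hk'd
      · exfalso
        have hsep := hρsep k hk k' hk' (Ne.symm hne)
        have hstepb := (hN n hnN).2
        have : dist k k' ≤ dist k (x n) + dist (x n) (x (n + 1)) + dist (x (n + 1)) k' :=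
          dist_triangle4 _ _ _ _
        rw [dist_comm k (x n), dist_comm (x n) (x (n+1))] at this
        have hle : ε' ≤ ε₀ := hε'le
        linarith
  obtain ⟨k₀, hk₀, hk₀ev⟩ := key ε₀ hε₀pos le_rfl
  refine ⟨k₀, hk₀, Metric.tendsto_atTop.mpr ?_⟩
  intro ε hε
  set ε' := min ε ε₀ with hε'
  have hε'pos : 0 < ε' := lt_min hε hε₀pos
  obtain ⟨k, hk, hkev⟩ := key ε' hε'pos (min_le_right _ _)
  have hkk : k = k₀ := by
    by_contra hne
    have hsep := hρsep k hk k₀ hk₀ hne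
    obtain ⟨n, hn1, hn2⟩ := (hkev.and hk₀ev).exists
    have : dist k k₀ ≤ dist k (x n) + dist (x n) k₀ := dist_triangle _ _ _
    rw [dist_comm k (x n)] at this
    have h1 : ε' ≤ ε₀ := min_le_right _ _
    linarith
  subst hkk
  obtain ⟨N, hN⟩ := eventually_atTop.mp hkev
  exact ⟨N, fun n hn => lt_of_lt_of_le (hN n hn) (min_le_left _ _)⟩

section B1
variable {E : Type*} [MetricSpace E]

lemma aux_B1 {K : Set E} (hKfin : K.Finite) (hKne : K.Nonempty)
    {V : E → ℝ} (hVK : ∀ k ∈ K, 0 ≤ V k)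
    {x : ℕ → E} {γ : ℕ → ℝ} (hγpos : ∀ n, 0 < γ n)
    {C : ℝ} (hC : 0 < C)
    (hstepdist : ∀ᶠ n in atTop, dist (x (n + 1)) (x n) ≤ C * γ (n + 1))
    (hγsmall : ∀ b, 0 < b → ∀ᶠ n in atTop, γ (n + 1) ≤ b)
    (hcont : ∀ θ, 0 < θ → ∃ ε, 0 < ε ∧ ∀ k ∈ K, ∀ y, dist y k < ε → |V y - V k| ≤ θ)
    (hstepB : ∀ ε, 0 < ε → ∃ c, 0 < c ∧ ∀ η, 0 < η → η ≤ c → ∀ᶠ n in atTop,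
      V (x (n + 1)) ≤ V (x n) + γ (n + 1) * η ∧
      (ε ≤ Metric.infDist (x n) K → V (x (n + 1)) ≤ V (x n) - γ (n + 1) * (c - η)))
    (hfreq : ∀ ε, 0 < ε → ∃ᶠ n in atTop, Metric.infDist (x n) K < ε) :
    Tendsto (fun n => Metric.infDist (x n) K) atTop (𝓝 0) := by
  classical
  -- reduce to eventual smallness
  suffices hsuff : ∀ ε, 0 < ε → ∀ᶠ n in atTop, Metric.infDist (x n) K < ε by
    rw [Metric.tendsto_nhds]
    intro ε hε
    filter_upwards [hsuff ε hε] with n hn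
    rw [Real.dist_0_eq_abs, abs_of_nonneg Metric.infDist_nonneg]
    exact hn
  by_contra hcon
  push_neg at hcon
  obtain ⟨ε₀, hε₀pos, hε₀⟩ := hcon
  replace hε₀ := hε₀.mono fun n hn => not_lt.mpr hn
  have hε₀freq : ∃ᶠ n in atTop, ε₀ ≤ Metric.infDist (x n) K := by
    apply hε₀.mono; intro n hn; exact not_lt.mp hn
  -- constants
  obtain ⟨c₀, hc₀pos, hc₀⟩ := hstepB (ε₀ / 2) (by positivity)
  set Δ : ℝ := c₀ * ε₀ / (8 * C) with hΔdef
  have hΔpos : 0 < Δ := by positivity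
  obtain ⟨ρV, hρVpos, hρVsep⟩ := aux_gap_real (hKfin.image V)
  set θ : ℝ := min Δ ρV / 8 with hθdef
  have hθpos : 0 < θ := by positivity
  have hθΔ : θ ≤ Δ / 8 := by rw [hθdef]; gcongr; exact min_le_left _ _
  have hθρ : θ ≤ ρV / 8 := by rw [hθdef]; gcongr; exact min_le_right _ _
  obtain ⟨εc, hεcpos, hεc⟩ := hcont θ hθpos
  set ε : ℝ := min εc (ε₀ / 4) with hεdef
  have hεpos : 0 < ε := lt_min hεcpos (by positivity)
  have hεεc : ε ≤ εc := min_le_left _ _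
  have hεε₀ : ε ≤ ε₀ / 4 := min_le_right _ _
  obtain ⟨cε, hcεpos, hcε⟩ := hstepB ε hεpos
  set η : ℝ := min c₀ cε / 2 with hηdef
  have hηpos : 0 < η := by positivity
  have hηc₀ : η ≤ c₀ / 2 := by rw [hηdef]; gcongr; exact min_le_left _ _
  have hηcε : η ≤ cε / 2 := by rw [hηdef]; gcongr; exact min_le_right _ _
  have hev1 := hc₀ η hηpos (by linarith)
  have hev2 := hcε η hηpos (by linarith)
  have hγs := hγsmall (min (ε₀ / (8 * C)) (θ / η)) (by positivity)
  -- put all eventual facts together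
  obtain ⟨N, hN⟩ := eventually_atTop.mp (hev1.and (hev2.and (hstepdist.and hγs)))
  have hgen : ∀ n, N ≤ n → V (x (n + 1)) ≤ V (x n) + γ (n + 1) * η :=
    fun n hn => (hN n hn).1.1
  have hrad₀ : ∀ n, N ≤ n → ε₀ / 2 ≤ Metric.infDist (x n) K →
      V (x (n + 1)) ≤ V (x n) - γ (n + 1) * (c₀ - η) := fun n hn => (hN n hn).1.2
  have hradε : ∀ n, N ≤ n → ε ≤ Metric.infDist (x n) K →
      V (x (n + 1)) ≤ V (x n) - γ (n + 1) * (cε - η) := fun n hn => (hN n hn).2.1.2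
  have hdist : ∀ n, N ≤ n → dist (x (n + 1)) (x n) ≤ C * γ (n + 1) :=
    fun n hn => (hN n hn).2.2.1
  have hγs1 : ∀ n, N ≤ n → γ (n + 1) ≤ ε₀ / (8 * C) :=
    fun n hn => le_trans (hN n hn).2.2.2 (min_le_left _ _)
  have hγs2 : ∀ n, N ≤ n → γ (n + 1) * η ≤ θ := by
    intro n hn
    have := le_trans (hN n hn).2.2.2 (min_le_right _ _)
    rw [← le_div_iff₀ hηpos]
    exact this
  have hdecε : ∀ n, N ≤ n → ε ≤ Metric.infDist (x n) K →
      V (x (n + 1)) ≤ V (x n) := by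
    intro n hn hd
    have := hradε n hn hd
    nlinarith [(hγpos (n + 1)).le]
  -- construction of the sequence of return times to the ε-neighbourhood of K
  have hP : ∀ M : ℕ, ∃ n, M < n ∧ (N ≤ n ∧ Metric.infDist (x n) K < ε) := by
    intro M
    obtain ⟨n, hn1, hn2⟩ :=
      ((hfreq ε hεpos).and_eventually (eventually_gt_atTop (max M N))).exists
    exact ⟨n, lt_of_le_of_lt (le_max_left _ _) hn2,
      le_of_lt (lt_of_le_of_lt (le_max_right _ _) hn2), hn1⟩
  set next : ℕ → ℕ := fun M => Nat.find (hP M) with hnextdef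
  have hnext1 : ∀ M, M < next M := fun M => (Nat.find_spec (hP M)).1
  have hnext2 : ∀ M, N ≤ next M := fun M => (Nat.find_spec (hP M)).2.1
  have hnext3 : ∀ M, Metric.infDist (x (next M)) K < ε := fun M => (Nat.find_spec (hP M)).2.2
  have hnextmin : ∀ M j, N ≤ j → M < j → j < next M → ε ≤ Metric.infDist (x j) K := by
    intro M j hNj hMj hjn
    by_contra hlt
    push_neg at hlt
    exact Nat.find_min (hP M) hjn ⟨hMj, hNj, hlt⟩
  set seq : ℕ → ℕ := fun i => next^[i + 1] N with hseqdef
  have hseqsucc : ∀ i, seq (i + 1) = next (seq i) := by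
    intro i
    show next^[i + 1 + 1] N = next (next^[i + 1] N)
    rw [Function.iterate_succ_apply']
  have hseqN : ∀ i, N ≤ seq i := by
    intro i
    show N ≤ next^[i + 1] N
    rw [Function.iterate_succ_apply']
    exact hnext2 _
  have hseqlt : ∀ i, seq i < seq (i + 1) := by
    intro i; rw [hseqsucc]; exact hnext1 _
  have hseqin : ∀ i, Metric.infDist (x (seq i)) K < ε := by
    intro i
    show Metric.infDist (x (next^[i + 1] N)) K < ε
    rw [Function.iterate_succ_apply']
    exact hnext3 _
  have hgap : ∀ i j, seq i < j → j < seq (i + 1) → ε ≤ Metric.infDist (x j) K := by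
    intro i j h1 h2
    rw [hseqsucc] at h2
    exact hnextmin (seq i) j (le_of_lt (lt_of_le_of_lt (hseqN i) h1)) h1 h2
  -- the values at return times
  have hnear : ∀ i, ∃ k, k ∈ K ∧ dist (x (seq i)) k < ε := by
    intro i
    obtain ⟨k, hk1, hk2⟩ := (Metric.infDist_lt_iff hKne).mp (hseqin i)
    exact ⟨k, hk1, hk2⟩
  choose kk hkkK hkkd using hnear
  set v : ℕ → ℝ := fun i => V (kk i) with hvdef
  have hv0 : ∀ i, 0 ≤ v i := fun i => hVK _ (hkkK i)
  have happrox : ∀ i, |V (x (seq i)) - v i| ≤ θ :=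
    fun i => hεc _ (hkkK i) _ (lt_of_lt_of_le (hkkd i) hεεc)
  -- T1 : between consecutive return times V grows by at most γ·η
  have hT1 : ∀ i, V (x (seq (i + 1))) ≤ V (x (seq i)) + γ (seq i + 1) * η := by
    intro i
    have hab : seq i ≤ seq (i + 1) := (hseqlt i).le
    have := aux_sum_le (f := fun n => V (x n))
      (w := fun j => if j = seq i then γ (seq i + 1) * η else 0) hab ?_
    · rwa [Finset.sum_ite_eq' _ _ (fun j => γ (seq i + 1) * η),
        if_pos (Finset.mem_Ico.mpr ⟨le_rfl, hseqlt i⟩)] at this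
    · intro j hj1 hj2
      rcases eq_or_lt_of_le hj1 with heq | hj1'
      · subst heq
        simpa using hgen _ (hseqN i)
      · have hNj : N ≤ j := le_of_lt (lt_of_le_of_lt (hseqN i) hj1')
        have := hdecε j hNj (hgap i j hj1' hj2)
        simp only [if_neg (by omega : j ≠ seq i), add_zero]
        exact this
  -- CORE : if an excursion reaches distance ε₀, V drops by Δ
  have hCORE : ∀ i, (∃ q, seq i < q ∧ q < seq (i + 1) ∧ ε₀ ≤ Metric.infDist (x q) K) →
      V (x (seq (i + 1))) ≤ V (x (seq i)) - Δ := by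
    intro i ⟨q, hq1, hq2, hq3⟩
    set p := seq i with hpdef
    set p' := seq (i + 1) with hp'def
    have hNp : N ≤ p := hseqN i
    have hp1q : p + 1 ≤ q := hq1
    -- the exit point a from the ε₀/2-neighbourhood
    set S : Finset ℕ := (Finset.Icc (p + 1) q).filter
      (fun j => Metric.infDist (x j) K ≤ ε₀ / 2) with hSdef
    have hSmem : ∀ j, j ∈ S ↔ ((p + 1 ≤ j ∧ j ≤ q) ∧ Metric.infDist (x j) K ≤ ε₀ / 2) := by
      intro j
      rw [hSdef, Finset.mem_filter, Finset.mem_Icc]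
    have hCγ : C * γ (p + 1) ≤ ε₀ / 8 := by
      have := hγs1 p hNp
      calc C * γ (p + 1) ≤ C * (ε₀ / (8 * C)) := by nlinarith
      _ = ε₀ / 8 := by field_simp
    have hp1S : p + 1 ∈ S := by
      refine (hSmem _).mpr ⟨⟨le_rfl, hp1q⟩, ?_⟩
      have h1 : Metric.infDist (x (p + 1)) K ≤
          Metric.infDist (x p) K + dist (x (p + 1)) (x p) :=
        Metric.infDist_le_infDist_add_dist
      have h2 := hdist p hNp
      have h3 := hseqin i
      linarith
    have hSne : S.Nonempty := ⟨p + 1, hp1S⟩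
    set a := S.max' hSne with hadef
    have haS := (hSmem a).mp (S.max'_mem hSne)
    obtain ⟨⟨hap1, haq'⟩, hainf⟩ := haS
    have haq : a < q := by
      rcases lt_or_eq_of_le haq' with h | h
      · exact h
      · exfalso; rw [h] at hainf; linarith
    have hNa : N ≤ a := le_trans hNp (by omega)
    have hann : ∀ j, a < j → j < q → ε₀ / 2 ≤ Metric.infDist (x j) K := by
      intro j hj1 hj2
      by_contra hle
      push_neg at hle
      have hjS : j ∈ S := (hSmem j).mpr ⟨⟨by omega, by omega⟩, hle.le⟩
      have := S.le_max' j hjS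
      omega
    -- (1) from p to a+1
    have h1 : V (x (a + 1)) ≤ V (x p) + γ (p + 1) * η := by
      have hab : p ≤ a + 1 := by omega
      have := aux_sum_le (f := fun n => V (x n))
        (w := fun j => if j = p then γ (p + 1) * η else 0) hab ?_
      · rwa [Finset.sum_ite_eq' _ _ (fun j => γ (p + 1) * η),
          if_pos (Finset.mem_Ico.mpr ⟨le_rfl, by omega⟩)] at this
      · intro j hj1 hj2
        rcases eq_or_lt_of_le hj1 with heq | hj1'
        · subst heq
          simpa using hgen _ hNp
        · have hNj : N ≤ j := le_of_lt (lt_of_le_of_lt hNp hj1')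
          have hjp' : j < p' := by
            have : j < q := by omega
            omega
          have := hdecε j hNj (hgap i j hj1' hjp')
          simp only [if_neg (by omega : j ≠ p), add_zero]
          exact this
    -- (2) from a+1 to q : strong decrease
    have h2 : V (x q) ≤ V (x (a + 1)) -
        (c₀ - η) * ∑ j ∈ Finset.Ico (a + 1) q, γ (j + 1) := by
      have hab : a + 1 ≤ q := haq
      have := aux_sum_le (f := fun n => V (x n))
        (w := fun j => -(γ (j + 1) * (c₀ - η))) hab ?_
      · have heq : ∑ j ∈ Finset.Ico (a + 1) q, -(γ (j + 1) * (c₀ - η)) =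
            -((c₀ - η) * ∑ j ∈ Finset.Ico (a + 1) q, γ (j + 1)) := by
          rw [Finset.sum_neg_distrib, Finset.mul_sum]
          congr 1
          exact Finset.sum_congr rfl fun j _ => mul_comm _ _
        rw [heq] at this
        linarith
      · intro j hj1 hj2
        have hNj : N ≤ j := by omega
        have hstep := hrad₀ j hNj (hann j (by omega) hj2)
        show V (x (j + 1)) ≤ V (x j) + -(γ (j + 1) * (c₀ - η))
        linarith
    -- (3) from q to p'
    have h3 : V (x p') ≤ V (x q) := by
      have hab : q ≤ p' := by
        have := hq2; omega
      have := aux_sum_le (f := fun n => V (x n)) (w := fun j => 0) hab ?_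
      · simpa using this
      · intro j hj1 hj2
        have hNj : N ≤ j := by omega
        rcases eq_or_lt_of_le hj1 with heq | hj1'
        · subst heq
          exact le_of_le_of_eq (hdecε _ hNj (le_trans (by linarith) hq3)) (by simp)
        · exact le_of_le_of_eq (hdecε j hNj (hgap i j (by omega) hj2)) (by simp)
    -- lower bound for the sum of step sizes between a+1 and q
    have hsum : ε₀ / (2 * C) ≤ ∑ j ∈ Finset.Ico a q, γ (j + 1) := by
      have hd1 : ε₀ / 2 ≤ dist (x q) (x a) := by
        have := Metric.infDist_le_infDist_add_dist (x := x q) (y := x a) (s := K)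
        linarith
      have hd2 : dist (x q) (x a) ≤ ∑ j ∈ Finset.Ico a q, dist (x (j + 1)) (x j) :=
        aux_dist_le x haq.le
      have hd3 : ∑ j ∈ Finset.Ico a q, dist (x (j + 1)) (x j) ≤
          ∑ j ∈ Finset.Ico a q, C * γ (j + 1) := by
        apply Finset.sum_le_sum
        intro j hj
        rw [Finset.mem_Ico] at hj
        exact hdist j (by omega)
      rw [← Finset.mul_sum] at hd3
      have h4 : ε₀ / 2 ≤ C * ∑ j ∈ Finset.Ico a q, γ (j + 1) := by linarith
      rw [show ε₀ / (2 * C) = ε₀ / 2 / C by ring, div_le_iff₀ hC]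
      rw [mul_comm]
      linarith
    have hSq : 3 * ε₀ / (8 * C) ≤ ∑ j ∈ Finset.Ico (a + 1) q, γ (j + 1) := by
      have hsplit : ∑ j ∈ Finset.Ico a q, γ (j + 1) =
          γ (a + 1) + ∑ j ∈ Finset.Ico (a + 1) q, γ (j + 1) :=
        Finset.sum_eq_sum_Ico_succ_bot haq _
      have hγa := hγs1 a hNa
      have h5 : ε₀ / (2 * C) - ε₀ / (8 * C) ≤
          ∑ j ∈ Finset.Ico (a + 1) q, γ (j + 1) := by linarith
      calc 3 * ε₀ / (8 * C) = ε₀ / (2 * C) - ε₀ / (8 * C) := by ring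
      _ ≤ _ := h5
    have hγp := hγs1 p hNp
    have hmul : (c₀ - η) * (3 * ε₀ / (8 * C)) ≤
        (c₀ - η) * ∑ j ∈ Finset.Ico (a + 1) q, γ (j + 1) :=
      mul_le_mul_of_nonneg_left hSq (by linarith)
    have h5 : γ (p + 1) * η ≤ ε₀ / (8 * C) * (c₀ / 2) :=
      mul_le_mul hγp hηc₀ hηpos.le (by positivity)
    have h6 : c₀ / 2 * (3 * ε₀ / (8 * C)) ≤ (c₀ - η) * (3 * ε₀ / (8 * C)) :=
      mul_le_mul_of_nonneg_right (by linarith) (by positivity)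
    have h7 : ε₀ / (8 * C) * (c₀ / 2) - c₀ / 2 * (3 * ε₀ / (8 * C)) =
        -(c₀ * ε₀ / (8 * C)) := by
      field_simp
      ring
    rw [hΔdef]
    linarith
  -- approximation of V at return times by values on K
  have happ1 : ∀ i, v i ≤ V (x (seq i)) + θ := by
    intro i; have := abs_le.mp (happrox i); linarith [this.1]
  have happ2 : ∀ i, V (x (seq i)) ≤ v i + θ := by
    intro i; have := abs_le.mp (happrox i); linarith [this.2]
  have hmono : ∀ i, v (i + 1) ≤ v i := by
    intro i
    have h1 := hT1 i
    have h2 := hγs2 (seq i) (hseqN i)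
    have h3 : v (i + 1) ≤ v i + 3 * θ := by linarith [happ1 (i + 1), happ2 i]
    by_contra hlt
    push_neg at hlt
    have hne : v i ≠ v (i + 1) := ne_of_lt hlt
    have hsep := hρVsep (v i) ⟨kk i, hkkK i, rfl⟩ (v (i + 1)) ⟨kk (i + 1), hkkK (i + 1), rfl⟩ hne
    rw [abs_of_neg (by linarith : v i - v (i + 1) < 0)] at hsep
    linarith
  have hdrop : ∀ i, (∃ q, seq i < q ∧ q < seq (i + 1) ∧ ε₀ ≤ Metric.infDist (x q) K) →
      v (i + 1) ≤ v i - ρV := by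
    intro i hex
    have h1 := hCORE i hex
    have h2 : v (i + 1) ≤ v i + 2 * θ - Δ := by linarith [happ1 (i + 1), happ2 i]
    have hlt : v (i + 1) < v i := by linarith
    have hne : v (i + 1) ≠ v i := ne_of_lt hlt
    have hsep := hρVsep (v (i + 1)) ⟨kk (i + 1), hkkK (i + 1), rfl⟩ (v i) ⟨kk i, hkkK i, rfl⟩ hne
    rw [abs_of_neg (by linarith : v (i + 1) - v i < 0)] at hsep
    linarith
  have hanti : Antitone v := antitone_nat_of_succ_le hmono
  have hseqmono : StrictMono seq := strictMono_nat_of_lt_succ hseqlt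
  have hDex : ∀ i, ∃ j, i ≤ j ∧
      (∃ q, seq j < q ∧ q < seq (j + 1) ∧ ε₀ ≤ Metric.infDist (x q) K) := by
    intro i
    obtain ⟨q, hq1, hq2⟩ :=
      (hε₀freq.and_eventually (eventually_gt_atTop (seq i))).exists
    have hiq : i ≤ q := le_trans hseqmono.le_apply hq2.le
    set j := Nat.findGreatest (fun j => seq j < q) q with hjdef
    have hspec : seq j < q := Nat.findGreatest_spec (P := fun j => seq j < q) hiq hq2
    have hge : i ≤ j := Nat.le_findGreatest (P := fun j => seq j < q) hiq hq2
    have hsucc : q ≤ seq (j + 1) := by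
      by_contra hc
      push_neg at hc
      have hle : j + 1 ≤ q := le_trans hseqmono.le_apply hc.le
      exact Nat.findGreatest_is_greatest (P := fun j => seq j < q) (Nat.lt_succ_self j) hle hc
    have hne : q ≠ seq (j + 1) := by
      intro heq
      have hin := hseqin (j + 1)
      rw [← heq] at hin
      linarith
    exact ⟨j, hge, q, hspec, lt_of_le_of_ne hsucc hne, hq1⟩
  have hM : ∀ M : ℕ, ∃ i, v i ≤ v 0 - M * ρV := by
    intro M
    induction M with
    | zero => exact ⟨0, by simp⟩
    | succ M ih =>
      obtain ⟨i, hi⟩ := ih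
      obtain ⟨j, hij, hD⟩ := hDex i
      refine ⟨j + 1, ?_⟩
      have hd := hdrop j hD
      have ha := hanti hij
      push_cast
      linarith
  obtain ⟨M, hMgt⟩ := exists_nat_gt (v 0 / ρV)
  obtain ⟨i, hi⟩ := hM M
  have hlt : v 0 < M * ρV := by
    rw [div_lt_iff₀ hρVpos] at hMgt; linarith
  linarith [hv0 i]

end B1

end AuxiliaryLemmas

/-- **Deterministic core of Delyon's stochastic approximation theorem.**
If `V` is a nonnegative `C¹` Lyapunov function on an open set `𝒪`, tending to
`+∞` at `∂𝒪` and at infinity, `𝒦 ⊂ 𝒪` is finite, `h` is continuous with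
`⟨∇V, h⟩ < 0` off `𝒦`, the steps satisfy `∑ γₙ = ∞`, `∑ γₙ² < ∞`, the
perturbed recursion `mₙ = mₙ₋₁ + γₙ h(mₙ₋₁) + γₙ (eₙ + rₙ)` has `∑ γₙ eₙ`
convergent, `rₙ → 0`, and `(mₙ)` stays in a compact subset of `𝒪`, then
`V(mₙ)` converges to a value of `V` on `𝒦` and `dist(mₙ, 𝒦) → 0`. -/
theorem delyon_deterministic_core
    (d : ℕ) (O : Set (EuclideanSpace ℝ (Fin d))) (hO : IsOpen O)
    (V : EuclideanSpace ℝ (Fin d) → ℝ)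
    (hV : ContDiffOn ℝ 1 V O) (hVnn : ∀ x ∈ O, 0 ≤ V x)
    (hVinf : ∀ C : ℝ, ∃ Q : Set (EuclideanSpace ℝ (Fin d)),
      IsCompact Q ∧ Q ⊆ O ∧ ∀ x ∈ O \ Q, C < V x)
    (Kset : Set (EuclideanSpace ℝ (Fin d))) (hKfin : Kset.Finite)
    (hKO : Kset ⊆ O)
    (h : EuclideanSpace ℝ (Fin d) → EuclideanSpace ℝ (Fin d))
    (hh : ContinuousOn h O)
    (hdesc : ∀ x ∈ O \ Kset, ⟪gradient V x, h x⟫ < 0)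
    (γ : ℕ → ℝ) (hγpos : ∀ n, 0 < γ n)
    (hγ1 : Tendsto (fun N => ∑ n ∈ Finset.range N, γ n) atTop atTop)
    (hγ2 : Summable fun n => γ n ^ 2)
    (m e r : ℕ → EuclideanSpace ℝ (Fin d))
    (hrec : ∀ n, m (n + 1) =
      m n + γ (n + 1) • h (m n) + γ (n + 1) • (e (n + 1) + r (n + 1)))
    (hseries : ∃ s, Tendsto (fun N => ∑ n ∈ Finset.range N, γ n • e n)
      atTop (𝓝 s))
    (hr : Tendsto r atTop (𝓝 0))
    (hcpt : ∃ Q : Set (EuclideanSpace ℝ (Fin d)),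
      IsCompact Q ∧ Q ⊆ O ∧ ∀ n, m n ∈ Q) :
    (∃ x ∈ Kset, Tendsto (fun n => V (m n)) atTop (𝓝 (V x))) ∧
    Tendsto (fun n => Metric.infDist (m n) Kset) atTop (𝓝 0) := by
  classical
  obtain ⟨Q, hQc, hQO, hmQ⟩ := hcpt
  rcases Nat.eq_zero_or_pos d with hd0 | hdpos
  · -- degenerate case `d = 0` : the space is a single point
    subst hd0
    haveI : Subsingleton (EuclideanSpace ℝ (Fin 0)) :=
      ⟨fun a b => by ext i; exact i.elim0⟩
    rcases Set.eq_empty_or_nonempty Kset with hKe | ⟨k, hk⟩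
    · exfalso
      have hm0 : m 0 ∈ O \ Kset := ⟨hQO (hmQ 0), by simp [hKe]⟩
      have hlt := hdesc (m 0) hm0
      have hz : gradient V (m 0) = 0 := Subsingleton.elim _ _
      rw [hz, inner_zero_left] at hlt
      exact lt_irrefl 0 hlt
    · have hmk : ∀ n, m n = k := fun n => Subsingleton.elim _ _
      refine ⟨⟨k, hk, ?_⟩, ?_⟩
      · simp only [hmk]; exact tendsto_const_nhds
      · simp only [hmk, Metric.infDist_zero_of_mem hk]; exact tendsto_const_nhds
  haveI : Nontrivial (EuclideanSpace ℝ (Fin d)) :=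
    Module.nontrivial_of_finrank_pos (R := ℝ) (by simpa using hdpos)
  -- derivative data
  set F : EuclideanSpace ℝ (Fin d) → EuclideanSpace ℝ (Fin d) →L[ℝ] ℝ :=
    fderiv ℝ V with hFdef
  have hdiffAt : ∀ y ∈ O, DifferentiableAt ℝ V y := fun y hy =>
    ((hV.differentiableOn one_ne_zero) y hy).differentiableAt (hO.mem_nhds hy)
  have hFc : ContinuousOn F O := hV.continuousOn_fderiv_of_isOpen hO le_rfl
  set φ : EuclideanSpace ℝ (Fin d) → ℝ := fun y => F y (h y) with hφdef
  have hφc : ContinuousOn φ O := hFc.clm_apply hh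
  have hgradinner : ∀ y v, ⟪gradient V y, v⟫ = F y v := fun y v =>
    InnerProductSpace.toDual_symm_apply
  have hφdesc : ∀ y ∈ O \ Kset, φ y < 0 := by
    intro y hy
    have hlt := hdesc y hy
    rwa [hgradinner] at hlt
  have hφ0 : ∀ y ∈ O, φ y ≤ 0 := by
    intro y hy
    by_cases hyK : y ∈ Kset
    · -- `y` is a limit of points of `O \ Kset`
      have hKfin' : (Kset \ {y}).Finite := hKfin.diff
      have hU : IsOpen (O ∩ (Kset \ {y})ᶜ) := hO.inter hKfin'.isClosed.isOpen_compl
      have hyU : y ∈ O ∩ (Kset \ {y})ᶜ := ⟨hy, by simp⟩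
      have hmem : O ∩ (Kset \ {y})ᶜ ∈ 𝓝 y := hU.mem_nhds hyU
      have hne : (𝓝[{y}ᶜ ∩ (O ∩ (Kset \ {y})ᶜ)] y).NeBot := by
        rw [← nhdsWithin_restrict' _ hmem]
        exact Real.punctured_nhds_module_neBot y
      have hsub : {y}ᶜ ∩ (O ∩ (Kset \ {y})ᶜ) ⊆ O \ Kset := by
        intro z hz
        refine ⟨hz.2.1, fun hzK => ?_⟩
        exact hz.2.2 ⟨hzK, hz.1⟩
      have hne2 : (𝓝[O \ Kset] y).NeBot := hne.mono (nhdsWithin_mono y hsub)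
      have htend : Tendsto φ (𝓝[O \ Kset] y) (𝓝 (φ y)) :=
        ((hφc y hy).mono Set.diff_subset).tendsto
      refine le_of_tendsto htend ?_
      filter_upwards [self_mem_nhdsWithin] with z hz
      exact (hφdesc z hz).le
    · exact (hφdesc y ⟨hy, hyK⟩).le
  -- geometric setup
  have hQne : Q.Nonempty := ⟨m 0, hmQ 0⟩
  obtain ⟨δ, hδpos, hδsub⟩ := hQc.exists_cthickening_subset_open hO hQO
  set Q2 := Metric.cthickening δ Q with hQ2def
  have hQ2c : IsCompact Q2 := hQc.cthickening
  have hQ2O : Q2 ⊆ O := hδsub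
  set Q1 := Metric.cthickening (δ / 2) Q with hQ1def
  have hQ1c : IsCompact Q1 := hQc.cthickening
  have hQ12 : Q1 ⊆ Q2 := Metric.cthickening_mono (by linarith) _
  have hQQ1 : Q ⊆ Q1 := Metric.self_subset_cthickening _
  have hQQ2 : Q ⊆ Q2 := Metric.self_subset_cthickening _
  have hQ1ne : Q1.Nonempty := hQne.mono hQQ1
  obtain ⟨G, hG⟩ := hQ2c.exists_bound_of_continuousOn (hFc.mono hQ2O)
  have hG0 : 0 ≤ G := le_trans (norm_nonneg _) (hG _ (hQQ2 (hmQ 0)))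
  obtain ⟨H, hH⟩ := hQ2c.exists_bound_of_continuousOn (hh.mono hQ2O)
  have hH0 : 0 ≤ H := le_trans (norm_nonneg _) (hH _ (hQQ2 (hmQ 0)))
  set C : ℝ := H + 1 with hCdef
  have hC : 0 < C := by linarith
  -- the shifted trajectory
  obtain ⟨sLim, hsLim⟩ := hseries
  set t : ℕ → EuclideanSpace ℝ (Fin d) :=
    fun n => sLim - ∑ k ∈ Finset.range (n + 1), γ k • e k with htdef
  have ht0 : Tendsto t atTop (𝓝 0) := by
    have h1 := hsLim.comp (tendsto_add_atTop_nat 1)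
    have h2 := (tendsto_const_nhds (x := sLim) (f := atTop)).sub h1
    simpa using h2
  set x : ℕ → EuclideanSpace ℝ (Fin d) := fun n => m n + t n with hxdef
  have hxm : ∀ n, x n - m n = t n := fun n => by
    show (m n + t n) - m n = t n
    abel
  have hxrec : ∀ n, x (n + 1) - x n = γ (n + 1) • (h (m n) + r (n + 1)) := by
    intro n
    have h1 : t (n + 1) = t n - γ (n + 1) • e (n + 1) := by
      show sLim - ∑ k ∈ Finset.range (n + 1 + 1), γ k • e k =
        (sLim - ∑ k ∈ Finset.range (n + 1), γ k • e k) - γ (n + 1) • e (n + 1)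
      rw [Finset.sum_range_succ (n := n + 1)]
      abel
    show m (n + 1) + t (n + 1) - (m n + t n) = _
    rw [hrec n, h1, smul_add, smul_add]
    abel
  -- step-size estimates
  have hγ0 : Tendsto γ atTop (𝓝 0) := by
    have h2 : Tendsto (fun n => γ n ^ 2) atTop (𝓝 0) := hγ2.tendsto_atTop_zero
    have h3 : Tendsto (fun n => Real.sqrt (γ n ^ 2)) atTop (𝓝 (Real.sqrt 0)) :=
      (Real.continuous_sqrt.tendsto 0).comp h2
    rw [Real.sqrt_zero] at h3
    exact h3.congr fun n => Real.sqrt_sq (hγpos n).le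
  have hγsmall : ∀ b : ℝ, 0 < b → ∀ᶠ n in atTop, γ (n + 1) ≤ b := by
    intro b hb
    have h1 := Metric.tendsto_nhds.mp (hγ0.comp (tendsto_add_atTop_nat 1)) b hb
    filter_upwards [h1] with n hn
    rw [Function.comp_apply, Real.dist_0_eq_abs, abs_of_pos (hγpos _)] at hn
    exact hn.le
  have hrshift : ∀ b : ℝ, 0 < b → ∀ᶠ n in atTop, ‖r (n + 1)‖ ≤ b := by
    intro b hb
    have h1 := Metric.tendsto_nhds.mp (hr.comp (tendsto_add_atTop_nat 1)) b hb
    filter_upwards [h1] with n hn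
    rw [Function.comp_apply, dist_zero_right] at hn
    exact hn.le
  have htsmall : ∀ b : ℝ, 0 < b → ∀ᶠ n in atTop, ‖t n‖ ≤ b := by
    intro b hb
    have h1 := Metric.tendsto_nhds.mp ht0 b hb
    filter_upwards [h1] with n hn
    rw [dist_zero_right] at hn
    exact hn.le
  have hΔbound : ∀ᶠ n in atTop, ‖x (n + 1) - x n‖ ≤ C * γ (n + 1) := by
    filter_upwards [hrshift 1 one_pos] with n hn
    rw [hxrec n, norm_smul, Real.norm_eq_abs, abs_of_pos (hγpos (n + 1))]
    have h1 : ‖h (m n) + r (n + 1)‖ ≤ C := by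
      have h2 := hH (m n) (hQQ2 (hmQ n))
      calc ‖h (m n) + r (n + 1)‖ ≤ ‖h (m n)‖ + ‖r (n + 1)‖ := norm_add_le _ _
      _ ≤ H + 1 := by linarith
    calc γ (n + 1) * ‖h (m n) + r (n + 1)‖ ≤ γ (n + 1) * C :=
        mul_le_mul_of_nonneg_left h1 (hγpos _).le
    _ = C * γ (n + 1) := mul_comm _ _
  have hxQ1 : ∀ᶠ n in atTop, x n ∈ Q1 := by
    filter_upwards [htsmall (δ / 2) (by linarith)] with n hn
    refine Metric.mem_cthickening_of_dist_le (x n) (m n) _ _ (hmQ n) ?_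
    rw [dist_eq_norm, hxm n]
    exact hn
  have hxO : ∀ᶠ n in atTop, x n ∈ O := hxQ1.mono fun n hn => hQ2O (hQ12 hn)
  -- uniform continuity on Q2
  have hFu := Metric.uniformContinuousOn_iff.mp
    (hQ2c.uniformContinuousOn_of_continuous (hFc.mono hQ2O))
  have hhu := Metric.uniformContinuousOn_iff.mp
    (hQ2c.uniformContinuousOn_of_continuous (hh.mono hQ2O))
  -- key one-step estimate
  have hstepV : ∀ η : ℝ, 0 < η → ∀ᶠ n in atTop,
      V (x (n + 1)) ≤ V (x n) + γ (n + 1) * (φ (x n) + η) := by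
    intro η hη
    obtain ⟨ζg, hζg, hFuζ⟩ := hFu (η / (3 * (C + 1))) (by positivity)
    obtain ⟨ζh, hζh, hhuζ⟩ := hhu (η / (3 * (G + 1))) (by positivity)
    have hev3 : ∀ᶠ n in atTop, C * γ (n + 1) ≤ min (ζg / 2) (δ / 2) := by
      filter_upwards [hγsmall (min (ζg / 2) (δ / 2) / C) (by positivity)] with n hn
      rw [mul_comm, ← le_div_iff₀ hC]
      exact hn
    filter_upwards [hxQ1, htsmall (min (ζh / 2) (δ / 2)) (by positivity),
      hΔbound, hrshift (η / (3 * (G + 1))) (by positivity), hev3]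
      with n hn1 hn2 hn3 hn5 hn6
    have hxnQ2 : x n ∈ Q2 := hQ12 hn1
    have hmnQ2 : m n ∈ Q2 := hQQ2 (hmQ n)
    have hΔle : ‖x (n + 1) - x n‖ ≤ min (ζg / 2) (δ / 2) := le_trans hn3 hn6
    -- all points of the segment lie in Q2
    have hseg : ∀ z ∈ segment ℝ (x n) (x (n + 1)), z ∈ Q2 ∧ ‖z - x n‖ ≤ ‖x (n + 1) - x n‖ := by
      intro z hz
      rw [segment_eq_image'] at hz
      obtain ⟨s, hs01, rfl⟩ := hz
      constructor
      · refine Metric.mem_cthickening_of_dist_le _ (m n) _ _ (hmQ n) ?_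
        have hd1 : dist (x n + s • (x (n + 1) - x n)) (x n) ≤ δ / 2 := by
          rw [dist_eq_norm]
          simp only [add_sub_cancel_left, norm_smul, Real.norm_eq_abs,
            abs_of_nonneg hs01.1]
          calc s * ‖x (n + 1) - x n‖ ≤ 1 * ‖x (n + 1) - x n‖ :=
            mul_le_mul_of_nonneg_right hs01.2 (norm_nonneg _)
          _ ≤ δ / 2 := by rw [one_mul]; exact le_trans hΔle (min_le_right _ _)
        have hd2 : dist (x n) (m n) ≤ δ / 2 := by
          rw [dist_eq_norm, hxm n]
          exact le_trans hn2 (min_le_right _ _)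
        calc dist (x n + s • (x (n + 1) - x n)) (m n) ≤ _ + _ := dist_triangle _ (x n) _
        _ ≤ δ / 2 + δ / 2 := add_le_add hd1 hd2
        _ = δ := by ring
      · simp only [add_sub_cancel_left, norm_smul, Real.norm_eq_abs,
          abs_of_nonneg hs01.1]
        calc s * ‖x (n + 1) - x n‖ ≤ 1 * ‖x (n + 1) - x n‖ :=
          mul_le_mul_of_nonneg_right hs01.2 (norm_nonneg _)
        _ = ‖x (n + 1) - x n‖ := one_mul _
    -- mean value estimate for V minus its linearization
    have hW : ∀ z ∈ segment ℝ (x n) (x (n + 1)),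
        HasFDerivWithinAt (fun y => V y - F (x n) y) (F z - F (x n))
          (segment ℝ (x n) (x (n + 1))) z := by
      intro z hz
      have hzO : z ∈ O := hQ2O (hseg z hz).1
      exact ((hdiffAt z hzO).hasFDerivAt.sub ((F (x n)).hasFDerivAt)).hasFDerivWithinAt
    have hbound : ∀ z ∈ segment ℝ (x n) (x (n + 1)),
        ‖F z - F (x n)‖ ≤ η / (3 * (C + 1)) := by
      intro z hz
      obtain ⟨hzQ2, hzd⟩ := hseg z hz
      have hdist : dist z (x n) < ζg := by
        rw [dist_eq_norm]
        calc ‖z - x n‖ ≤ ‖x (n + 1) - x n‖ := hzd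
        _ ≤ ζg / 2 := le_trans hΔle (min_le_left _ _)
        _ < ζg := by linarith
      have := hFuζ z hzQ2 (x n) hxnQ2 hdist
      rw [dist_eq_norm] at this
      exact this.le
    have hMVT := Convex.norm_image_sub_le_of_norm_hasFDerivWithin_le hW hbound
      (convex_segment _ _) (left_mem_segment ℝ _ _) (right_mem_segment ℝ _ _)
    -- unfold the mean value estimate
    have hlin : F (x n) (x (n + 1)) - F (x n) (x n) = F (x n) (x (n + 1) - x n) :=
      (map_sub (F (x n)) _ _).symm
    have hMVT2 : V (x (n + 1)) - V (x n) ≤ F (x n) (x (n + 1) - x n) +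
        η / (3 * (C + 1)) * ‖x (n + 1) - x n‖ := by
      have h1 := le_trans (le_abs_self _) hMVT
      rw [Real.norm_eq_abs] at hMVT
      have h2 : V (x (n + 1)) - F (x n) (x (n + 1)) - (V (x n) - F (x n) (x n)) ≤
          η / (3 * (C + 1)) * ‖x (n + 1) - x n‖ := by
        calc _ ≤ |V (x (n + 1)) - F (x n) (x (n + 1)) - (V (x n) - F (x n) (x n))| :=
          le_abs_self _
        _ ≤ _ := hMVT
      linarith [hlin]
    -- main term
    have hmain : F (x n) (x (n + 1) - x n) = γ (n + 1) *
        (F (x n) (h (m n)) + F (x n) (r (n + 1))) := by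
      rw [hxrec n, map_smul, map_add]
      simp [smul_eq_mul]
    have hsplit : F (x n) (h (m n)) = φ (x n) + F (x n) (h (m n) - h (x n)) := by
      rw [map_sub]
      simp [hφdef]
    -- error bounds
    have hopG : ∀ w, F (x n) w ≤ G * ‖w‖ := by
      intro w
      calc F (x n) w ≤ |F (x n) w| := le_abs_self _
      _ = ‖F (x n) w‖ := (Real.norm_eq_abs _).symm
      _ ≤ ‖F (x n)‖ * ‖w‖ := (F (x n)).le_opNorm w
      _ ≤ G * ‖w‖ := mul_le_mul_of_nonneg_right (hG _ hxnQ2) (norm_nonneg _)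
    have hGkey : ∀ w : EuclideanSpace ℝ (Fin d), ‖w‖ ≤ η / (3 * (G + 1)) →
        F (x n) w ≤ η / 3 := by
      intro w hw
      have hu0 : 0 ≤ η / (3 * (G + 1)) := by positivity
      have hu : (3 * (G + 1)) * (η / (3 * (G + 1))) = η := by field_simp
      have h4 : G * (η / (3 * (G + 1))) ≤ (G + 1) * (η / (3 * (G + 1))) :=
        mul_le_mul_of_nonneg_right (by linarith) hu0
      have h5 : F (x n) w ≤ G * ‖w‖ := hopG w
      have h6 : G * ‖w‖ ≤ G * (η / (3 * (G + 1))) := mul_le_mul_of_nonneg_left hw hG0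
      linarith
    have herr1 : F (x n) (h (m n) - h (x n)) ≤ η / 3 := by
      have hd : dist (h (m n)) (h (x n)) < η / (3 * (G + 1)) := by
        apply hhuζ (m n) hmnQ2 (x n) hxnQ2
        rw [dist_comm, dist_eq_norm, hxm n]
        calc ‖t n‖ ≤ ζh / 2 := le_trans hn2 (min_le_left _ _)
        _ < ζh := by linarith
      rw [dist_eq_norm] at hd
      exact hGkey _ hd.le
    have herr2 : F (x n) (r (n + 1)) ≤ η / 3 := hGkey _ hn5
    have herr3 : η / (3 * (C + 1)) * ‖x (n + 1) - x n‖ ≤ γ (n + 1) * (η / 3) := by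
      have hu0 : 0 ≤ η / (3 * (C + 1)) := by positivity
      have h4 : η / (3 * (C + 1)) * ‖x (n + 1) - x n‖ ≤
          η / (3 * (C + 1)) * (C * γ (n + 1)) := mul_le_mul_of_nonneg_left hn3 hu0
      have hu : (3 * (C + 1)) * (η / (3 * (C + 1))) = η := by field_simp
      have h5 : η / (3 * (C + 1)) * C ≤ η / (3 * (C + 1)) * (C + 1) :=
        mul_le_mul_of_nonneg_left (by linarith) hu0
      have h6 : η / (3 * (C + 1)) * (C * γ (n + 1)) =
          (η / (3 * (C + 1)) * C) * γ (n + 1) := by ring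
      have h7 : (η / (3 * (C + 1)) * C) * γ (n + 1) ≤ (η / 3) * γ (n + 1) := by
        apply mul_le_mul_of_nonneg_right _ (hγpos _).le
        calc η / (3 * (C + 1)) * C ≤ η / (3 * (C + 1)) * (C + 1) := h5
        _ = η / 3 := by field_simp
      calc η / (3 * (C + 1)) * ‖x (n + 1) - x n‖ ≤ _ := h4
      _ = (η / (3 * (C + 1)) * C) * γ (n + 1) := h6
      _ ≤ (η / 3) * γ (n + 1) := h7
      _ = γ (n + 1) * (η / 3) := mul_comm _ _
    have hfin1 : F (x n) (x (n + 1) - x n) ≤ γ (n + 1) * (φ (x n) + 2 * η / 3) := by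
      rw [hmain]
      exact mul_le_mul_of_nonneg_left (by linarith) (hγpos _).le
    have heq : γ (n + 1) * (φ (x n) + 2 * η / 3) + γ (n + 1) * (η / 3) =
        γ (n + 1) * (φ (x n) + η) := by ring
    linarith
  -- the step estimates used by the combinatorial lemma
  have hstepB : ∀ ε : ℝ, 0 < ε → ∃ c, 0 < c ∧ ∀ η', 0 < η' → η' ≤ c →
      ∀ᶠ n in atTop, V (x (n + 1)) ≤ V (x n) + γ (n + 1) * η' ∧
        (ε ≤ Metric.infDist (x n) Kset →
          V (x (n + 1)) ≤ V (x n) - γ (n + 1) * (c - η')) := by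
    intro ε hε
    set R := {y ∈ Q1 | ε ≤ Metric.infDist y Kset} with hRdef
    have hRclosed : IsClosed R := by
      rw [hRdef]
      exact (Metric.isClosed_cthickening).inter
        (isClosed_le continuous_const (Metric.continuous_infDist_pt Kset))
    have hRQ1 : R ⊆ Q1 := fun y hy => hy.1
    have hRcomp : IsCompact R := hQ1c.of_isClosed_subset hRclosed hRQ1
    have hRO : R ⊆ O \ Kset := by
      intro y hy
      refine ⟨hQ2O (hQ12 hy.1), fun hyK => ?_⟩
      have := Metric.infDist_zero_of_mem hyK
      have h2 := hy.2
      rw [this] at h2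
      linarith
    by_cases hRne : R.Nonempty
    · obtain ⟨y₀, hy₀R, hy₀max⟩ :=
        hRcomp.exists_isMaxOn hRne (hφc.mono fun y hy => (hRO hy).1)
      refine ⟨-φ y₀, by linarith [hφdesc y₀ (hRO hy₀R)], ?_⟩
      intro η' hη'1 hη'2
      filter_upwards [hstepV η' hη'1, hxQ1, hxO] with n h1 h2 h3
      constructor
      · have h4 := hφ0 (x n) h3
        have h5 : γ (n + 1) * (φ (x n) + η') ≤ γ (n + 1) * η' :=
          mul_le_mul_of_nonneg_left (by linarith) (hγpos _).le
        linarith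
      · intro hd
        have hxR : x n ∈ R := ⟨h2, hd⟩
        have h4 : φ (x n) ≤ φ y₀ := hy₀max hxR
        have h5 : γ (n + 1) * (φ (x n) + η') ≤ γ (n + 1) * (φ y₀ + η') :=
          mul_le_mul_of_nonneg_left (by linarith) (hγpos _).le
        have h6 : γ (n + 1) * (φ y₀ + η') = -(γ (n + 1) * (-φ y₀ - η')) := by ring
        linarith
    · refine ⟨1, one_pos, ?_⟩
      intro η' hη'1 hη'2
      filter_upwards [hstepV η' hη'1, hxQ1, hxO] with n h1 h2 h3
      constructor
      · have h4 := hφ0 (x n) h3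
        have h5 : γ (n + 1) * (φ (x n) + η') ≤ γ (n + 1) * η' :=
          mul_le_mul_of_nonneg_left (by linarith) (hγpos _).le
        linarith
      · intro hd
        exact absurd ⟨h2, hd⟩ (fun hmem => hRne ⟨x n, hmem⟩)
  -- K is nonempty
  have hKne : Kset.Nonempty := by
    rcases Set.eq_empty_or_nonempty Kset with hKe | hKn
    · exfalso
      obtain ⟨y₀, hy₀R, hy₀max⟩ :=
        hQ1c.exists_isMaxOn hQ1ne (hφc.mono fun y hy => hQ2O (hQ12 hy))
      have hc : 0 < -φ y₀ := by
        have := hφdesc y₀ ⟨hQ2O (hQ12 hy₀R), by simp [hKe]⟩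
        linarith
      obtain ⟨N, hN⟩ := eventually_atTop.mp
        ((hstepV (-φ y₀ / 2) (by linarith)).and (hxQ1.and hxO))
      refine aux_diverge (V := fun n => V (x n)) hγpos hγ1
        (c := -φ y₀ / 2) (by linarith) (N := N) ?_ ?_
      · intro n hn
        obtain ⟨h1, h2, h3⟩ := hN n hn
        have hφx : φ (x n) ≤ φ y₀ := hy₀max h2
        have h5 : γ (n + 1) * (φ (x n) + -φ y₀ / 2) ≤
            γ (n + 1) * (-(-φ y₀ / 2)) :=
          mul_le_mul_of_nonneg_left (by linarith) (hγpos _).le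
        have h6 : γ (n + 1) * (-(-φ y₀ / 2)) = -(γ (n + 1) * (-φ y₀ / 2)) := by ring
        linarith
      · intro n hn
        exact hVnn _ (hN n hn).2.2
    · exact hKn
  -- frequent visits to every neighbourhood of K
  have hfreq : ∀ ε : ℝ, 0 < ε → ∃ᶠ n in atTop, Metric.infDist (x n) Kset < ε := by
    intro ε hε
    by_contra hcon
    rw [Filter.not_frequently] at hcon
    obtain ⟨c, hc, hcprop⟩ := hstepB ε hε
    have hev := hcprop (c / 2) (by linarith) (by linarith)
    obtain ⟨N, hN⟩ := eventually_atTop.mp (hev.and (hcon.and hxO))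
    refine aux_diverge (V := fun n => V (x n)) hγpos hγ1
      (c := c / 2) (by linarith) (N := N) ?_ ?_
    · intro n hn
      obtain ⟨⟨h1, h2⟩, h3, h4⟩ := hN n hn
      have h5 := h2 (not_lt.mp h3)
      have h6 : c - c / 2 = c / 2 := by ring
      rw [h6] at h5
      exact h5
    · intro n hn
      exact hVnn _ (hN n hn).2.2
  -- a uniform continuity modulus of V near K
  have hcont : ∀ θ : ℝ, 0 < θ → ∃ ε, 0 < ε ∧ ∀ k ∈ Kset, ∀ y,
      dist y k < ε → |V y - V k| ≤ θ := by
    intro θ hθ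
    have hchoice : ∀ k ∈ Kset, ∃ εk, 0 < εk ∧ ∀ y, dist y k < εk → |V y - V k| ≤ θ := by
      intro k hk
      have hcw : ContinuousWithinAt V O k := hV.continuousOn k (hKO hk)
      rw [Metric.continuousWithinAt_iff] at hcw
      obtain ⟨δ1, hδ1, hδ1p⟩ := hcw θ hθ
      obtain ⟨δ2, hδ2, hδ2p⟩ := Metric.isOpen_iff.mp hO k (hKO hk)
      refine ⟨min δ1 δ2, lt_min hδ1 hδ2, ?_⟩
      intro y hy
      have hyO : y ∈ O := hδ2p (lt_of_lt_of_le hy (min_le_right _ _))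
      have := hδ1p hyO (lt_of_lt_of_le hy (min_le_left _ _))
      rw [Real.dist_eq] at this
      exact this.le
    choose! εf hεf1 hεf2 using hchoice
    set T := hKfin.toFinset.image εf with hTdef
    have hTne : T.Nonempty := by
      rw [hTdef]
      exact Finset.Nonempty.image (by simpa using hKne) _
    refine ⟨T.min' hTne, ?_, ?_⟩
    · obtain ⟨k, hkmem, hkeq⟩ := Finset.mem_image.mp (T.min'_mem hTne)
      rw [← hkeq]
      exact hεf1 k (hKfin.mem_toFinset.mp hkmem)
    · intro k hk y hy
      have hle : T.min' hTne ≤ εf k :=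
        T.min'_le _ (Finset.mem_image.mpr ⟨k, hKfin.mem_toFinset.mpr hk, rfl⟩)
      exact hεf2 k hk y (lt_of_lt_of_le hy hle)
  -- apply the two combinatorial lemmas
  have hstepdist : ∀ᶠ n in atTop, dist (x (n + 1)) (x n) ≤ C * γ (n + 1) := by
    filter_upwards [hΔbound] with n hn
    rw [dist_eq_norm]
    exact hn
  have hVK : ∀ k ∈ Kset, 0 ≤ V k := fun k hk => hVnn k (hKO hk)
  have hd : Tendsto (fun n => Metric.infDist (x n) Kset) atTop (𝓝 0) :=
    aux_B1 hKfin hKne hVK hγpos hC hstepdist hγsmall hcont hstepB hfreq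
  have hstep0 : Tendsto (fun n => dist (x (n + 1)) (x n)) atTop (𝓝 0) := by
    apply squeeze_zero' (Eventually.of_forall fun n => dist_nonneg) hstepdist
    have := (hγ0.comp (tendsto_add_atTop_nat 1)).const_mul C
    simpa using this
  obtain ⟨k, hkK, hxk⟩ := aux_B2 hKfin hKne hstep0 hd
  have hmk : Tendsto m atTop (𝓝 k) := by
    have h1 := hxk.sub ht0
    have h2 : (fun n => x n - t n) = m := by
      funext n
      show (m n + t n) - t n = m n
      abel
    rw [h2] at h1
    simpa using h1
  constructor
  · refine ⟨k, hkK, ?_⟩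
    have hVk : ContinuousWithinAt V O k := hV.continuousOn k (hKO hkK)
    have hmO : Tendsto m atTop (𝓝[O] k) :=
      tendsto_nhdsWithin_of_tendsto_nhds_of_eventually_within m hmk
        (Eventually.of_forall fun n => hQO (hmQ n))
    exact hVk.tendsto.comp hmO
  · have hdist2 : Tendsto (fun n => dist (m n) k) atTop (𝓝 0) :=
      tendsto_iff_dist_tendsto_zero.mp hmk
    apply squeeze_zero (fun n => Metric.infDist_nonneg)
      (fun n => Metric.infDist_le_dist_of_mem hkK) hdist2
end

section
/- (Real-sequence lemma used in the proof of Delyon's theorem.) Let A ⊂ ℝ be a finite union of disjoint bounded open intervals, let ε > 0, C > 0, let γ_n > 0 with γ_n → 0 and Σ_n γ_n = ∞, and let (u_n) be a sequence of real numbers that is bounded below and satisfies, for all n larger than some N: u_n ≤ u_{n-1} − γ_n ε whenever u_{n-1} ∉ A, and |u_n − u_{n-1}| ≤ γ_n C for all n. Then dist(u_n, A) → 0 as n → ∞. -/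
open Filter Topology

/-- **Real-sequence lemma from the proof of Delyon's theorem.**
Let `A` be a finite union of pairwise disjoint bounded open intervals, and
let `(uₙ)` be bounded below with `uₙ ≤ uₙ₋₁ − γₙ ε` whenever `uₙ₋₁ ∉ A` and
`|uₙ − uₙ₋₁| ≤ γₙ C` always (for `n` beyond some `N`), where `γₙ > 0`,
`γₙ → 0` and `∑ γₙ = ∞`.  Then `dist(uₙ, A) → 0`. -/
theorem delyon_real_sequence_lemma
    (F : Finset (ℝ × ℝ)) (A : Set ℝ)
    (hA : A = ⋃ p ∈ F, Set.Ioo p.1 p.2)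
    (hdisj : (F : Set (ℝ × ℝ)).Pairwise fun p q =>
      Disjoint (Set.Ioo p.1 p.2) (Set.Ioo q.1 q.2))
    (ε C : ℝ) (hε : 0 < ε) (hC : 0 < C)
    (γ : ℕ → ℝ) (hγpos : ∀ n, 0 < γ n)
    (hγ0 : Tendsto γ atTop (𝓝 0))
    (hγ1 : Tendsto (fun N => ∑ n ∈ Finset.range N, γ n) atTop atTop)
    (u : ℕ → ℝ) (hbdd : BddBelow (Set.range u))
    (N : ℕ)
    (hdec : ∀ n ≥ N, u n ∉ A → u (n + 1) ≤ u n - γ (n + 1) * ε)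
    (hstep : ∀ n ≥ N, |u (n + 1) - u n| ≤ γ (n + 1) * C) :
    Tendsto (fun n => Metric.infDist (u n) A) atTop (𝓝 0) := by
  obtain ⟨c, hc⟩ := hbdd
  have hcu : ∀ n, c ≤ u n := fun n => hc ⟨n, rfl⟩
  -- Step 1: u visits A at arbitrarily large times
  have visits : ∀ n₀ : ℕ, ∃ m, n₀ ≤ m ∧ u m ∈ A := by
    intro n₀
    by_contra h
    push_neg at h
    set n₂ := max n₀ N with hn2
    have hout : ∀ m, n₂ ≤ m → u m ∉ A := fun m hm =>
      h m (le_trans (le_max_left _ _) hm)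
    have key : ∀ j : ℕ, u (n₂ + j) + ε * ∑ i ∈ Finset.range j, γ (n₂ + 1 + i) ≤ u n₂ := by
      intro j
      induction j with
      | zero => simp
      | succ j ih =>
        have h1 := hdec (n₂ + j) (by omega) (hout _ (by omega))
        have e1 : n₂ + (j + 1) = n₂ + j + 1 := by omega
        rw [e1, Finset.sum_range_succ]
        have e2 : n₂ + 1 + j = n₂ + j + 1 := by omega
        rw [e2]
        have hcomm : ε * γ (n₂ + j + 1) = γ (n₂ + j + 1) * ε := mul_comm _ _
        linarith
    have hS : Tendsto (fun j => ∑ i ∈ Finset.range j, γ (n₂ + 1 + i)) atTop atTop := by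
      have hg : Tendsto (fun j : ℕ => n₂ + 1 + j) atTop atTop :=
        tendsto_atTop_atTop_of_monotone (fun a b hab => by omega) (fun b => ⟨b, by omega⟩)
      have h1 : Tendsto (fun j => ∑ i ∈ Finset.range (n₂ + 1 + j), γ i) atTop atTop :=
        hγ1.comp hg
      have h2 : ∀ j, ∑ i ∈ Finset.range j, γ (n₂ + 1 + i)
          = (∑ i ∈ Finset.range (n₂ + 1 + j), γ i) + -(∑ i ∈ Finset.range (n₂ + 1), γ i) := by
        intro j
        rw [Finset.sum_range_add]
        ring
      simp only [h2]
      exact tendsto_atTop_add_const_right _ _ h1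
    obtain ⟨j, hj⟩ := (hS.eventually_ge_atTop ((u n₂ - c) / ε + 1)).exists
    have h3 := key j
    have h4 := hcu (n₂ + j)
    have h5 : u n₂ - c < ε * ((u n₂ - c) / ε + 1) := by
      rw [mul_add, mul_one, mul_div_cancel₀ _ (ne_of_gt hε)]
      linarith
    nlinarith [mul_le_mul_of_nonneg_left hj (le_of_lt hε)]
  -- main quantitative claim
  have main : ∀ δ : ℝ, 0 < δ → ∃ M : ℕ, ∀ n ≥ M, Metric.infDist (u n) A < δ := by
    intro δ hδ
    by_contra hbad
    push_neg at hbad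
    -- choose n₁ with small steps beyond it
    have hsm0 : ∀ᶠ k in atTop, γ k < δ / (2 * C) := by
      have : (0:ℝ) < δ / (2 * C) := by positivity
      exact hγ0.eventually_lt_const this
    obtain ⟨nγ, hnγ⟩ := eventually_atTop.mp hsm0
    set n₁ := max N nγ with hn1
    have hN₁ : N ≤ n₁ := le_max_left _ _
    have hsmall : ∀ k, n₁ ≤ k → γ (k + 1) * C ≤ δ / 2 := by
      intro k hk
      have h1 : γ (k + 1) < δ / (2 * C) := hnγ (k + 1) (by omega)
      have h2 : γ (k + 1) * (2 * C) < δ := (lt_div_iff₀ (by positivity)).mp h1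
      nlinarith
    have band : ∀ x : ℝ, δ ≤ Metric.infDist x A → ∀ y ∈ A, δ ≤ |x - y| := by
      intro x hx y hy
      refine le_trans hx ?_
      rw [← Real.dist_eq]
      exact Metric.infDist_le_dist_of_mem hy
    -- ratchet lemma
    have ratchet : ∀ t : ℝ, (∀ y ∈ A, y < t ∨ t + δ / 2 ≤ y) →
        ∀ n, n₁ ≤ n → u n < t + δ / 2 → ∀ m, n ≤ m → u m < t + δ / 2 := by
      intro t hband n hn hbase m hm
      induction m, hm using Nat.le_induction with
      | base => exact hbase
      | succ k hk ih =>
        by_cases hA' : u k ∈ A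
        · rcases hband _ hA' with h | h
          · have hs := le_of_abs_le (hstep k (le_trans hN₁ (le_trans hn hk)))
            have hγC := hsmall k (le_trans hn hk)
            linarith
          · linarith
        · have hd := hdec k (le_trans hN₁ (le_trans hn hk)) hA'
          have hpos := mul_pos (hγpos (k + 1)) hε
          linarith
    -- drop lemma
    have drop : ∀ k, n₁ ≤ k → δ ≤ Metric.infDist (u k) A →
        ∃ k', k < k' ∧ n₁ ≤ k' ∧ δ ≤ Metric.infDist (u k') A ∧ u k' ≤ u k - δ / 2 := by
      intro k hk1 hk2
      obtain ⟨m, hm1, hm2⟩ := visits (max (k + 1) n₁)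
      have hmk : k + 1 ≤ m := le_trans (le_max_left _ _) hm1
      have hmn₁ : n₁ ≤ m := le_trans (le_max_right _ _) hm1
      obtain ⟨k', hk'1, hk'2⟩ := hbad m
      -- ratchet from time k
      have r1 : ∀ j, k ≤ j → u j < (u k - δ / 4) + δ / 2 := by
        refine ratchet (u k - δ / 4) ?_ k hk1 (by linarith)
        intro y hy
        have hd := band _ hk2 y hy
        rcases le_abs.mp hd with h | h
        · left; linarith
        · right; linarith
      have hum : u m < u k + δ / 4 := by have := r1 m (by omega); linarith
      have huk' : u k' < u k + δ / 4 := by have := r1 k' (by omega); linarith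
      have hd2 := band _ hk'2 _ hm2
      rcases le_abs.mp hd2 with h | h
      · -- u m ≤ u k' - δ : ratchet from m gives u k' < u k', contradiction
        exfalso
        have r2 : ∀ j, m ≤ j → u j < (u k' - δ / 2) + δ / 2 := by
          refine ratchet (u k' - δ / 2) ?_ m hmn₁ (by linarith)
          intro y hy
          have hd := band _ hk'2 y hy
          rcases le_abs.mp hd with h' | h'
          · left; linarith
          · right; linarith
        have := r2 k' hk'1
        linarith
      · exact ⟨k', by omega, by omega, hk'2, by linarith⟩
    -- iterate the drop
    obtain ⟨k₀, hk₀1, hk₀2⟩ := hbad n₁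
    have iter : ∀ i : ℕ, ∃ k, n₁ ≤ k ∧ δ ≤ Metric.infDist (u k) A ∧
        u k ≤ u k₀ - i * (δ / 2) := by
      intro i
      induction i with
      | zero => exact ⟨k₀, hk₀1, hk₀2, by simp⟩
      | succ i ih =>
        obtain ⟨k, h1, h2, h3⟩ := ih
        obtain ⟨k', h4, h5, h6, h7⟩ := drop k h1 h2
        refine ⟨k', h5, h6, ?_⟩
        push_cast
        linarith
    obtain ⟨i, hi⟩ := exists_nat_gt ((u k₀ - c) / (δ / 2))
    obtain ⟨k, _, _, hk3⟩ := iter i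
    have h8 : u k₀ - c < i * (δ / 2) := (div_lt_iff₀ (by linarith)).mp hi
    have h9 := hcu k
    linarith
  -- conclude
  rw [Metric.tendsto_atTop]
  intro δ hδ
  obtain ⟨M, hM⟩ := main δ hδ
  refine ⟨M, fun n hn => ?_⟩
  rw [Real.dist_eq, sub_zero, abs_of_nonneg Metric.infDist_nonneg]
  exact hM n hn
end

section
/- (Critical points of the expected update for a laterally connected network of BCM neurons.) Let K = N, let d_1, …, d_K ∈ ℝ^N be linearly independent with matrix D (rows d_kᵀ) and α_1, …, α_K > 0, Σα_k = 1, P = diag(α). Consider n neurons with weight multivector m ∈ ℝ^{nN}, lateral connection matrix L (n×n, symmetric, ‖L‖ < 1), per-class response multivector c = ((I − L)^{-1} ⊗ D) m ∈ ℝ^{nK}, and expected update h(m) = (I_n ⊗ Dᵀ P) Φ(c), where Φ applies Φ_i(c_i)_k = c_{ik}(c_{ik} − Σ_j α_j c_{ij}²) to each neuron's response block c_i ∈ ℝ^K separately. Then h(m) = 0 if and only if for every neuron i there exists a subset S_i ⊆ {1, …, K} with c_{ik} = (Σ_{j∈S_i} α_j)^{-1} for k ∈ S_i and c_{ik} = 0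 for k ∉ S_i. -/
open Matrix Kronecker

lemma scalar_bcm {K : ℕ} (α : Fin K → ℝ) (hα : ∀ k, 0 < α k) (v : Fin K → ℝ) :
    (∀ k, v k * (v k - ∑ j, α j * v j ^ 2) = 0) ↔
      ∃ S : Finset (Fin K), (∀ k ∈ S, v k = (∑ j ∈ S, α j)⁻¹) ∧ (∀ k ∉ S, v k = 0) := by
  set θ := ∑ j, α j * v j ^ 2 with hθ
  constructor
  · intro h
    have hcases : ∀ k, v k = 0 ∨ v k = θ := by
      intro k
      rcases mul_eq_zero.mp (h k) with h1 | h1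
      · exact Or.inl h1
      · exact Or.inr (by linarith)
    set S : Finset (Fin K) := Finset.univ.filter (fun k => v k ≠ 0) with hS
    have h3 : ∑ j, α j * v j ^ 2 = (∑ j ∈ S, α j) * θ ^ 2 := by
      rw [← Finset.sum_filter_add_sum_filter_not Finset.univ (fun k => v k ≠ 0)]
      have h1 : ∑ j ∈ Finset.univ.filter (fun k => ¬ v k ≠ 0), α j * v j ^ 2 = 0 := by
        apply Finset.sum_eq_zero
        intro j hj
        simp only [Finset.mem_filter, not_not] at hj
        simp [hj.2]
      have h2 : ∑ j ∈ S, α j * v j ^ 2 = ∑ j ∈ S, α j * θ ^ 2 := by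
        apply Finset.sum_congr rfl
        intro j hj
        simp only [hS, Finset.mem_filter] at hj
        rcases hcases j with h' | h'
        · exact absurd h' hj.2
        · rw [h']
      rw [h1, h2, add_zero, ← Finset.sum_mul]
    have hθeq : θ = (∑ j ∈ S, α j) * θ ^ 2 := hθ.trans h3
    by_cases hθ0 : θ = 0
    · refine ⟨∅, by simp, ?_⟩
      intro k _
      rcases hcases k with h' | h'
      · exact h'
      · rw [h', hθ0]
    · have hs : (∑ j ∈ S, α j) * θ = 1 := by
        have hfac : θ * ((∑ j ∈ S, α j) * θ - 1) = 0 := by nlinarith [hθeq]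
        rcases mul_eq_zero.mp hfac with h' | h'
        · exact absurd h' hθ0
        · linarith
      have hsne : (∑ j ∈ S, α j) ≠ 0 := by
        intro h0; rw [h0, zero_mul] at hs; norm_num at hs
      have hθinv : θ = (∑ j ∈ S, α j)⁻¹ := by
        field_simp
        linarith [hs]
      refine ⟨S, ?_, ?_⟩
      · intro k hk
        rcases hcases k with h' | h'
        · simp only [hS, Finset.mem_filter] at hk; exact absurd h' hk.2
        · rw [h', hθinv]
      · intro k hk
        simp only [hS, Finset.mem_filter, Finset.mem_univ, true_and, not_not] at hk
        exact hk
  · rintro ⟨S, h1, h2⟩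
    by_cases hSe : S = ∅
    · intro k
      have : v k = 0 := h2 k (by simp [hSe])
      simp [this]
    · have hspos : 0 < ∑ j ∈ S, α j := by
        obtain ⟨x, hx⟩ := Finset.nonempty_iff_ne_empty.mpr hSe
        exact Finset.sum_pos (fun j _ => hα j) ⟨x, hx⟩
      have hsne : (∑ j ∈ S, α j) ≠ 0 := ne_of_gt hspos
      have hθval : θ = (∑ j ∈ S, α j)⁻¹ := by
        rw [hθ, ← Finset.sum_filter_add_sum_filter_not Finset.univ (fun k => k ∈ S)]
        have e1 : ∑ j ∈ Finset.univ.filter (fun k => k ∈ S), α j * v j ^ 2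
            = ∑ j ∈ S, α j * ((∑ j ∈ S, α j)⁻¹) ^ 2 := by
          rw [Finset.filter_mem_eq_inter, Finset.univ_inter]
          exact Finset.sum_congr rfl (fun j hj => by rw [h1 j hj])
        have e2 : ∑ j ∈ Finset.univ.filter (fun k => ¬ k ∈ S), α j * v j ^ 2 = 0 :=
          Finset.sum_eq_zero (fun j hj => by
            simp only [Finset.mem_filter] at hj; simp [h2 j hj.2])
        rw [e1, e2, add_zero, ← Finset.sum_mul]
        field_simp
      intro k
      by_cases hk : k ∈ S
      · rw [h1 k hk, hθval]; ring
      · simp [h2 k hk]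

/-- **Critical points of the expected update for a laterally connected
network of BCM neurons.**  With `K = N`, linearly independent mean vectors
`d k` (rows of `D`), `P = diag α`, a symmetric lateral matrix `L` of operator
norm `< 1`, responses `c = ((I − L)⁻¹ ⊗ D) m`, and blockwise BCM
nonlinearity `Φ`, the expected network update `h(m) = (I ⊗ Dᵀ P) Φ(c)`
vanishes iff every neuron `i` admits a subset `S i` of classes with
`c i k = (∑_{j ∈ S i} α j)⁻¹` on `S i` and `c i k = 0` off `S i`. -/
theorem network_bcm_critical_points
    (nn K : ℕ) (d : Fin K → Fin K → ℝ) (hd : LinearIndependent ℝ d)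
    (α : Fin K → ℝ) (hα : ∀ k, 0 < α k) (hαsum : ∑ k, α k = 1)
    (D : Matrix (Fin K) (Fin K) ℝ) (hD : D = Matrix.of d)
    (P : Matrix (Fin K) (Fin K) ℝ) (hP : P = Matrix.diagonal α)
    (L : Matrix (Fin nn) (Fin nn) ℝ) (hLsym : L.IsSymm)
    (hL : ‖Matrix.toEuclideanCLM (𝕜 := ℝ) L‖ < 1)
    (m : Fin nn × Fin K → ℝ)
    (c : Fin nn × Fin K → ℝ)
    (hc : c = ((1 - L)⁻¹ ⊗ₖ D).mulVec m)
    (Φc : Fin nn × Fin K → ℝ)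
    (hΦc : ∀ i k, Φc (i, k) =
      c (i, k) * (c (i, k) - ∑ j, α j * c (i, j) ^ 2)) :
    ((1 : Matrix (Fin nn) (Fin nn) ℝ) ⊗ₖ (Dᵀ * P)).mulVec Φc = 0 ↔
      ∀ i : Fin nn, ∃ S : Finset (Fin K),
        (∀ k ∈ S, c (i, k) = (∑ j ∈ S, α j)⁻¹) ∧
        (∀ k ∉ S, c (i, k) = 0) := by
  clear hL hLsym hc hαsum
  clear m L
  -- step 1: Kronecker mulVec with identity block
  have hkron : ∀ (i : Fin nn) (k : Fin K),
      (((1 : Matrix (Fin nn) (Fin nn) ℝ) ⊗ₖ (Dᵀ * P)).mulVec Φc) (i, k)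
        = ((Dᵀ * P).mulVec (fun l => Φc (i, l))) k := by
    intro i k
    simp [Matrix.mulVec, dotProduct, Fintype.sum_prod_type,
      Matrix.one_apply, kroneckerMap_apply, ite_mul, Finset.sum_ite_eq]
  -- injectivity of Dᵀ * P
  have hinj : ∀ y : Fin K → ℝ, (Dᵀ * P).mulVec y = 0 → y = 0 := by
    intro y hy
    rw [← Matrix.mulVec_mulVec] at hy
    set z := P.mulVec y with hz
    have hz0 : z = 0 := by
      have hsum : ∑ l, z l • d l = 0 := by
        funext k
        have := congrFun hy k
        simpa [Matrix.mulVec, dotProduct, hD, Matrix.transpose_apply,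
          mul_comm, Finset.sum_apply] using this
      have := Fintype.linearIndependent_iff.mp hd z hsum
      funext l; exact this l
    funext l
    have h0 : α l * y l = 0 := by
      have := congrFun hz0 l
      simpa [hz, hP, Matrix.mulVec_diagonal] using this
    have := (hα l).ne'
    -- αl ≠ 0
    rcases mul_eq_zero.mp h0 with h' | h'
    · exact absurd h' this
    · exact h'
  constructor
  · intro h i
    have hΦ0 : ∀ k, Φc (i, k) = 0 := by
      have hv : (Dᵀ * P).mulVec (fun l => Φc (i, l)) = 0 := by
        funext k
        rw [← hkron i k, h]
        rfl
      intro k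
      exact congrFun (hinj _ hv) k
    exact (scalar_bcm α hα (fun k => c (i, k))).mp (by
      intro k
      have := hΦ0 k
      rw [hΦc i k] at this
      simpa using this)
  · intro h
    funext ⟨i, k⟩
    rw [hkron i k]
    have hΦ0 : (fun l => Φc (i, l)) = 0 := by
      obtain ⟨S, h1, h2⟩ := h i
      funext l
      rw [hΦc i l]
      exact (scalar_bcm α hα (fun k => c (i, k))).mpr ⟨S, h1, h2⟩ l
    rw [hΦ0, Matrix.mulVec_zero]
    rfl
end

section
/- (Stability of selective states in a BCM network.) Let L be a symmetric real n×n matrix with operator norm ‖L‖ < 1, let β_1, …, β_n > 0, and let C be a symmetric positive definite K×K matrix. Then every eigenvalue of the nK×nK matrix (diag(β_1, …, β_n)(I_n − L)^{-1}) ⊗ C is real and strictly positive. Consequently, every eigenvalue of the network Jacobian J = −(diag(β)(I − L)^{-1}) ⊗ C is real and strictly negative, so the selective states of a laterally connected network of triplet BCM neurons — at which each neuron's Jacobian block equals −β_i I and the network Jacobian takes this Kronecker form with C = Dᵀ P D — are stable. -/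
open Matrix Kronecker
open scoped ComplexOrder

private lemma aux_conjPD {m : Type*} [Fintype m] [DecidableEq m]
    {M B : Matrix m m ℝ} (hM : M.PosDef) (hB : IsUnit B.det) :
    (Bᵀ * M * B).PosDef := by
  have hMt : Mᵀ = M := by
    simpa [conjTranspose_eq_transpose_of_trivial] using hM.isHermitian.eq
  refine PosDef.of_dotProduct_mulVec_pos ?_ ?_
  · show (Bᵀ * M * B)ᴴ = _
    simp [conjTranspose_eq_transpose_of_trivial, transpose_mul, hMt, Matrix.mul_assoc]
  · intro x hx
    have hBu : IsUnit B := (isUnit_iff_isUnit_det B).mpr hB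
    have hBx : B *ᵥ x ≠ 0 := by
      intro h
      exact hx (mulVec_injective_iff_isUnit.mpr hBu (by simpa using h))
    have := hM.dotProduct_mulVec_pos hBx
    have hrw : star x ⬝ᵥ ((Bᵀ * M * B) *ᵥ x)
        = star (B *ᵥ x) ⬝ᵥ (M *ᵥ (B *ᵥ x)) := by
      rw [← mulVec_mulVec, ← mulVec_mulVec, dotProduct_mulVec _ Bᵀ _,
        vecMul_transpose]
      simp [star_trivial]
    rw [hrw]
    exact this

private lemma aux_kronPD {n K : Type*} [Fintype n] [DecidableEq n]
    [Fintype K] [DecidableEq K] {S : Matrix n n ℝ} {C : Matrix K K ℝ}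
    (hS : S.PosDef) (hC : C.PosDef) : (S ⊗ₖ C).PosDef := by
  exact hS.kronecker hC

private lemma aux_posDef_map {m : Type*} [Fintype m] {M : Matrix m m ℝ}
    (hM : M.PosDef) : (M.map Complex.ofReal).PosDef := by
  have hMsymm : ∀ i j, M j i = M i j := fun i j => by
    have := congrFun (congrFun hM.isHermitian.eq i) j
    simpa using this
  refine PosDef.of_dotProduct_mulVec_pos ?_ ?_
  · exact hM.isHermitian.map Complex.ofReal (fun a => by simp)
  · intro x hx
    set u : m → ℝ := fun i => (x i).re with hu
    set w : m → ℝ := fun i => (x i).im with hw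
    set z := star x ⬝ᵥ ((M.map Complex.ofReal) *ᵥ x) with hz
    have hz2 : z = ∑ i, ∑ j, star (x i) * ((M i j : ℂ) * x j) := by
      simp [hz, dotProduct, mulVec, Finset.mul_sum]
    have hre : z.re = u ⬝ᵥ (M *ᵥ u) + w ⬝ᵥ (M *ᵥ w) := by
      rw [hz2]
      simp only [Complex.re_sum, Complex.mul_re, Complex.mul_im,
        Complex.ofReal_re, Complex.ofReal_im, Pi.star_apply,
        RCLike.star_def, Complex.conj_re, Complex.conj_im]
      simp only [dotProduct, mulVec, Finset.mul_sum, ← Finset.sum_add_distrib]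
      refine Finset.sum_congr rfl fun i _ => Finset.sum_congr rfl fun j _ => ?_
      simp only [hu, hw]
      ring
    have him : z.im = 0 := by
      rw [hz2]
      simp only [Complex.im_sum, Complex.mul_re, Complex.mul_im,
        Complex.ofReal_re, Complex.ofReal_im, Pi.star_apply,
        RCLike.star_def, Complex.conj_re, Complex.conj_im]
      have : ∀ i j, (x i).re * (M i j * (x j).im + 0 * (x j).re) +
          -(x i).im * (M i j * (x j).re - 0 * (x j).im)
          = M i j * ((x i).re * (x j).im) - M i j * ((x i).im * (x j).re) := by
        intro i j; ring
      simp only [this, Finset.sum_sub_distrib]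
      have hswap : ∑ i, ∑ j, M i j * ((x i).im * (x j).re)
          = ∑ i, ∑ j, M i j * ((x i).re * (x j).im) := by
        rw [Finset.sum_comm]
        refine Finset.sum_congr rfl fun i _ => Finset.sum_congr rfl fun j _ => ?_
        rw [hMsymm i j]
        ring
      rw [hswap, sub_self]
    have huw : u ≠ 0 ∨ w ≠ 0 := by
      by_contra h
      push_neg at h
      apply hx
      funext i
      have h1 := congrFun h.1 i
      have h2 := congrFun h.2 i
      simp only [hu, hw, Pi.zero_apply] at h1 h2
      exact Complex.ext (by simpa using h1) (by simpa using h2)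
    have hr : 0 < u ⬝ᵥ (M *ᵥ u) + w ⬝ᵥ (M *ᵥ w) := by
      have hu' : (0:ℝ) ≤ u ⬝ᵥ (M *ᵥ u) := by
        rcases eq_or_ne u 0 with h | h
        · simp [h]
        · simpa [star_trivial] using (hM.dotProduct_mulVec_pos h).le
      have hw' : (0:ℝ) ≤ w ⬝ᵥ (M *ᵥ w) := by
        rcases eq_or_ne w 0 with h | h
        · simp [h]
        · simpa [star_trivial] using (hM.dotProduct_mulVec_pos h).le
      rcases huw with h | h
      · have := hM.dotProduct_mulVec_pos h
        simp only [star_trivial] at this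
        linarith
      · have := hM.dotProduct_mulVec_pos h
        simp only [star_trivial] at this
        linarith
    have : z = ((u ⬝ᵥ (M *ᵥ u) + w ⬝ᵥ (M *ᵥ w) : ℝ) : ℂ) :=
      Complex.ext (by simpa using hre) (by simpa using him)
    rw [this]
    exact Complex.zero_lt_real.mpr hr

private lemma aux_spec {m : Type*} [Fintype m] [DecidableEq m]
    {A : Matrix m m ℂ} (hA : A.PosDef) {z : ℂ} (hz : z ∈ spectrum ℂ A) :
    z.im = 0 ∧ 0 < z.re := by
  rw [spectrum.mem_iff] at hz
  have hdet : ((algebraMap ℂ (Matrix m m ℂ)) z - A).det = 0 := by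
    by_contra h
    exact hz ((isUnit_iff_isUnit_det _).mpr (isUnit_iff_ne_zero.mpr h))
  obtain ⟨v, hv0, hv⟩ := Matrix.exists_mulVec_eq_zero_iff.mpr hdet
  have hAv : A *ᵥ v = z • v := by
    have h1 : ((algebraMap ℂ (Matrix m m ℂ)) z) *ᵥ v = z • v := by
      rw [Algebra.algebraMap_eq_smul_one, smul_mulVec, one_mulVec]
    rw [sub_mulVec, h1, sub_eq_zero] at hv
    exact hv.symm
  have hpos := hA.dotProduct_mulVec_pos hv0
  rw [hAv] at hpos
  have hsmul : star v ⬝ᵥ (z • v) = z * (star v ⬝ᵥ v) := by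
    rw [dotProduct_smul]
    simp [smul_eq_mul]
  rw [hsmul] at hpos
  have hc : (0:ℂ) < star v ⬝ᵥ v := dotProduct_star_self_pos_iff.mpr hv0
  set c := star v ⬝ᵥ v with hcdef
  rw [Complex.lt_def] at hc hpos
  simp only [Complex.zero_re, Complex.zero_im] at hc hpos
  obtain ⟨hcre, hcim⟩ := hc
  obtain ⟨hzcre, hzcim⟩ := hpos
  rw [Complex.mul_im] at hzcim
  rw [Complex.mul_re] at hzcre
  have him : z.im = 0 := by
    rw [← hcim] at hzcim
    simp only [mul_zero, add_zero] at hzcim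
    field_simp at hzcim
    rcases mul_eq_zero.mp (by linarith : z.im * c.re = 0) with h | h
    · exact h
    · exact absurd h hcre.ne'
  refine ⟨him, ?_⟩
  rw [him, ← hcim] at hzcre
  simp only [zero_mul, mul_zero, sub_zero] at hzcre
  nlinarith [hcre, hzcre]

/-- **Stability of selective states in a BCM network.**
For symmetric `L` with operator norm `< 1`, positive `β i`, and symmetric
positive definite `C`, every (complex) eigenvalue of
`(diag β (I − L)⁻¹) ⊗ C` is real and strictly positive; consequently every
eigenvalue of the network Jacobian `J = −(diag β (I − L)⁻¹) ⊗ C` is real and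
strictly negative. -/
theorem network_jacobian_eigenvalues_negative
    (nn K : ℕ)
    (L : Matrix (Fin nn) (Fin nn) ℝ) (hLsym : L.IsSymm)
    (hL : ‖Matrix.toEuclideanCLM (𝕜 := ℝ) L‖ < 1)
    (β : Fin nn → ℝ) (hβ : ∀ i, 0 < β i)
    (C : Matrix (Fin K) (Fin K) ℝ) (hC : C.PosDef) :
    (∀ z : ℂ, z ∈ spectrum ℂ
        (((Matrix.diagonal β * (1 - L)⁻¹) ⊗ₖ C).map Complex.ofReal) →
      z.im = 0 ∧ 0 < z.re) ∧
    (∀ z : ℂ, z ∈ spectrum ℂ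
        ((-((Matrix.diagonal β * (1 - L)⁻¹) ⊗ₖ C)).map Complex.ofReal) →
      z.im = 0 ∧ z.re < 0) := by
  classical
  -- Step 1 : 1 - L is positive definite
  have h1L : (1 - L).PosDef := by
    refine PosDef.of_dotProduct_mulVec_pos ?_ ?_
    · show (1 - L)ᴴ = _
      rw [conjTranspose_eq_transpose_of_trivial, transpose_sub, transpose_one, hLsym.eq]
    · intro x hx
      set T := Matrix.toEuclideanCLM (𝕜 := ℝ) L with hT
      set y : EuclideanSpace ℝ (Fin nn) := (WithLp.equiv 2 (Fin nn → ℝ)).symm x with hy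
      have hy0 : y ≠ 0 := by
        simpa [hy] using hx
      have hxLx : x ⬝ᵥ (L *ᵥ x) = inner ℝ y (T y) := by
        rw [hT, hy]
        simp [PiLp.inner_apply, dotProduct, RCLike.inner_apply]
        exact Finset.sum_congr rfl fun i _ => mul_comm _ _
      have hxx : x ⬝ᵥ x = ‖y‖ ^ 2 := by
        rw [← real_inner_self_eq_norm_sq]
        simp [PiLp.inner_apply, dotProduct, hy, RCLike.inner_apply]
        rw [EuclideanSpace.norm_sq_eq]
        simp [pow_two]
      have hb : inner ℝ y (T y) ≤ ‖T‖ * ‖y‖ ^ 2 := by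
        calc (inner ℝ y (T y) : ℝ) ≤ ‖y‖ * ‖T y‖ := real_inner_le_norm _ _
          _ ≤ ‖y‖ * (‖T‖ * ‖y‖) :=
              mul_le_mul_of_nonneg_left (T.le_opNorm y) (norm_nonneg y)
          _ = ‖T‖ * ‖y‖ ^ 2 := by ring
      have hyn : 0 < ‖y‖ ^ 2 := by
        have : ‖y‖ ≠ 0 := norm_ne_zero_iff.mpr hy0
        positivity
      have hunf : star x ⬝ᵥ ((1 - L) *ᵥ x) = x ⬝ᵥ x - x ⬝ᵥ (L *ᵥ x) := by
        rw [sub_mulVec, one_mulVec]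
        simp [star_trivial, dotProduct_sub]
      rw [hunf, hxx, hxLx]
      nlinarith [hb, hyn, hL]
  -- Step 2 : similarity to a positive definite matrix
  set D : Matrix (Fin nn) (Fin nn) ℝ := Matrix.diagonal (fun i => Real.sqrt (β i)) with hDdef
  have hDdet : IsUnit D.det := by
    rw [hDdef, det_diagonal]
    exact isUnit_iff_ne_zero.mpr
      (Finset.prod_ne_zero_iff.mpr fun i _ => (Real.sqrt_pos.mpr (hβ i)).ne')
  have hDD : D * D = Matrix.diagonal β := by
    rw [hDdef, diagonal_mul_diagonal]
    exact congrArg Matrix.diagonal (funext fun i => Real.mul_self_sqrt (hβ i).le)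
  have hInv : ((1 - L)⁻¹).PosDef := h1L.inv
  have hS : (Dᵀ * (1 - L)⁻¹ * D).PosDef := aux_conjPD hInv hDdet
  set S := Dᵀ * (1 - L)⁻¹ * D with hSdef
  have hDt : Dᵀ = D := diagonal_transpose _
  have hKron : (S ⊗ₖ C).PosDef := aux_kronPD hS hC
  have hPc : ((S ⊗ₖ C).map Complex.ofReal).PosDef := aux_posDef_map hKron
  have hDinv : D * D⁻¹ = 1 := mul_nonsing_inv D hDdet
  have hDinv' : D⁻¹ * D = 1 := nonsing_inv_mul D hDdet
  have e2 : D * S * D⁻¹ = Matrix.diagonal β * (1 - L)⁻¹ := by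
    rw [hSdef, hDt]
    have : D * (D * (1 - L)⁻¹ * D) * D⁻¹ = (D * D) * ((1 - L)⁻¹ * (D * D⁻¹)) := by
      simp only [Matrix.mul_assoc]
    rw [this, hDD, hDinv, Matrix.mul_one]
  have e1 : (D ⊗ₖ (1 : Matrix (Fin K) (Fin K) ℝ)) * (S ⊗ₖ C) * (D⁻¹ ⊗ₖ 1)
      = (Matrix.diagonal β * (1 - L)⁻¹) ⊗ₖ C := by
    rw [← mul_kronecker_mul, ← mul_kronecker_mul, e2, Matrix.one_mul, Matrix.mul_one]
  have hmap : ∀ {p : Type} [Fintype p] (A B : Matrix p p ℝ),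
      (A * B).map Complex.ofReal = A.map Complex.ofReal * B.map Complex.ofReal := by
    intro p _ A B
    exact Matrix.map_mul (L := A) (M := B) (f := Complex.ofRealHom)
  have hmap1 : ∀ {p : Type} [DecidableEq p] , ((1 : Matrix p p ℝ)).map Complex.ofReal
      = (1 : Matrix p p ℂ) :=
    Matrix.map_one _ Complex.ofReal_zero Complex.ofReal_one
  have hUV : ((D ⊗ₖ (1 : Matrix (Fin K) (Fin K) ℝ)) * (D⁻¹ ⊗ₖ 1)) = 1 := by
    rw [← mul_kronecker_mul, hDinv, Matrix.one_mul, one_kronecker_one]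
  have hVU : ((D⁻¹ ⊗ₖ (1 : Matrix (Fin K) (Fin K) ℝ)) * (D ⊗ₖ 1)) = 1 := by
    rw [← mul_kronecker_mul, hDinv', Matrix.one_mul, one_kronecker_one]
  set u : (Matrix (Fin nn × Fin K) (Fin nn × Fin K) ℂ)ˣ :=
    { val := (D ⊗ₖ (1 : Matrix (Fin K) (Fin K) ℝ)).map Complex.ofReal
      inv := (D⁻¹ ⊗ₖ (1 : Matrix (Fin K) (Fin K) ℝ)).map Complex.ofReal
      val_inv := by rw [← hmap, hUV, hmap1]
      inv_val := by rw [← hmap, hVU, hmap1] } with hu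
  have hconj : ((Matrix.diagonal β * (1 - L)⁻¹) ⊗ₖ C).map Complex.ofReal
      = (u : Matrix (Fin nn × Fin K) (Fin nn × Fin K) ℂ) * ((S ⊗ₖ C).map Complex.ofReal)
        * ((u⁻¹ : (Matrix (Fin nn × Fin K) (Fin nn × Fin K) ℂ)ˣ) : Matrix (Fin nn × Fin K) (Fin nn × Fin K) ℂ) := by
    rw [← e1, hmap, hmap]
    rfl
  have hspec : spectrum ℂ (((Matrix.diagonal β * (1 - L)⁻¹) ⊗ₖ C).map Complex.ofReal)
      = spectrum ℂ ((S ⊗ₖ C).map Complex.ofReal) := by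
    rw [hconj, spectrum.units_conjugate]
  constructor
  · intro z hzm
    rw [hspec] at hzm
    exact aux_spec hPc hzm
  · intro z hzm
    have hneg : (-((Matrix.diagonal β * (1 - L)⁻¹) ⊗ₖ C)).map Complex.ofReal
        = -(((Matrix.diagonal β * (1 - L)⁻¹) ⊗ₖ C).map Complex.ofReal) := by
      ext i j
      simp
    rw [hneg, ← spectrum.neg_eq, Set.mem_neg] at hzm
    rw [hspec] at hzm
    obtain ⟨h1, h2⟩ := aux_spec hPc hzm
    constructor
    · simpa using h1
    · simp only [Complex.neg_re] at h2
      linarith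
end

section
/- (Expected triplet BCM update equals the classical BCM update on the mixture means.) Let (Ω, ℱ, P) be a probability space, Z : Ω → {1, …, K} a latent class with P(Z = k) = α_k > 0, Σα_k = 1, and d¹, d², d³ : Ω → ℝ^n square-integrable random vectors that are mutually independent with common conditional mean E[dⁱ | Z = k] = d_k ∈ ℝ^n under each conditional measure P(· | Z = k). Fix m ∈ ℝ^n and set cⁱ = ⟨m, dⁱ⟩ and θ = E[c¹ c²] = Σ_k α_k ⟨m, d_k⟩². Then E[c²(c³ − θ) d¹] = Σ_{k=1}^K α_k c_k (c_k − θ) d_k, where c_k = ⟨m, d_k⟩. In particular, the expected triplet BCM update under the mixture model equals the expected classical BCM update for the discrete input model on the mixture means d_1, …, d_K with probabilities α_1, …, α_K. -/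
open MeasureTheory ProbabilityTheory Matrix

/-- **Expected triplet BCM update equals the classical BCM update on the
mixture means.**  For conditionally independent square-integrable views
`X 0, X 1, X 2` with conditional means `d k` given the latent class `Z = k`,
and `cⁱ = ⟨m, Xⁱ⟩`, `θ = ∑ k, α k ⟨m, d k⟩²`, one has `E[c¹c²] = θ` and
`E[c²(c³ − θ) X¹] = ∑ k, α k c_k (c_k − θ) d k` where `c_k = ⟨m, d k⟩`. -/
theorem triplet_bcm_expected_update
    {Ω : Type*} [MeasurableSpace Ω] (P : Measure Ω) [IsProbabilityMeasure P]
    (K n : ℕ) (Z : Ω → Fin K) (hZ : Measurable Z)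
    (α : Fin K → ℝ) (hα : ∀ k, 0 < α k) (hαsum : ∑ k, α k = 1)
    (hPZ : ∀ k, P (Z ⁻¹' {k}) = ENNReal.ofReal (α k))
    (X : Fin 3 → Ω → Fin n → ℝ) (hXmeas : ∀ i, Measurable (X i))
    (hX2 : ∀ i, MemLp (X i) 2 P)
    (d : Fin K → Fin n → ℝ)
    (hindep : ∀ k,
      iIndepFun X (P[|Z ⁻¹' {k}]))
    (hmean : ∀ i k j, (∫ ω, X i ω j ∂(P[|Z ⁻¹' {k}])) = d k j)
    (m : Fin n → ℝ) (θ : ℝ) (hθ : θ = ∑ k, α k * (m ⬝ᵥ d k) ^ 2) :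
    (∫ ω, (m ⬝ᵥ X 0 ω) * (m ⬝ᵥ X 1 ω) ∂P) = θ ∧
    (∀ j, (∫ ω, (m ⬝ᵥ X 1 ω) * ((m ⬝ᵥ X 2 ω) - θ) * X 0 ω j ∂P) =
      ∑ k, α k * ((m ⬝ᵥ d k) * ((m ⬝ᵥ d k) - θ) * d k j)) := by
  classical
  have hP0 : ∀ k, P (Z ⁻¹' {k}) ≠ 0 := by
    intro k
    rw [hPZ k]
    simp [ENNReal.ofReal_eq_zero, not_le, hα k]
  -- decomposition of an integral over the mixture components
  have hrest : ∀ k, P.restrict (Z ⁻¹' {k}) = (P (Z ⁻¹' {k})) • (P[|Z ⁻¹' {k}]) := by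
    intro k
    show P.restrict _ =
      P (Z ⁻¹' {k}) • ((P (Z ⁻¹' {k}))⁻¹ • P.restrict (Z ⁻¹' {k}))
    rw [smul_smul, ENNReal.mul_inv_cancel (hP0 k) (measure_ne_top _ _), one_smul]
  have decomp : ∀ (f : Ω → ℝ), (∀ k, Integrable f (P[|Z ⁻¹' {k}])) →
      (∫ ω, f ω ∂P) = ∑ k, α k * ∫ ω, f ω ∂(P[|Z ⁻¹' {k}]) := by
    intro f hf
    have hint : ∀ k, IntegrableOn f (Z ⁻¹' {k}) P := by
      intro k
      rw [IntegrableOn, hrest k]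
      exact (hf k).smul_measure (measure_ne_top _ _)
    have hU : (⋃ k, Z ⁻¹' {k}) = Set.univ := by
      ext ω; simp
    have hd : Pairwise (Function.onFun Disjoint fun k => Z ⁻¹' ({k} : Set (Fin K))) := by
      intro a b hab
      rw [Function.onFun, Set.disjoint_left]
      rintro ω ha hb
      simp only [Set.mem_preimage, Set.mem_singleton_iff] at ha hb
      exact hab (ha.symm.trans hb)
    have hIntU : IntegrableOn f (⋃ k, Z ⁻¹' {k}) P := integrableOn_finite_iUnion.mpr hint
    have h1 : (∫ ω, f ω ∂P) = ∫ ω in ⋃ k, Z ⁻¹' {k}, f ω ∂P := by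
      rw [hU, Measure.restrict_univ]
    rw [h1, integral_iUnion (fun k => hZ (measurableSet_singleton k)) hd hIntU, tsum_fintype]
    refine Finset.sum_congr rfl fun k _ => ?_
    rw [hrest k, integral_smul_measure, hPZ k, ENNReal.toReal_ofReal (hα k).le, smul_eq_mul]
  -- square integrability under the conditional measures
  have hmemc : ∀ i k, MemLp (X i) 2 (P[|Z ⁻¹' {k}]) := by
    intro i k
    have h1 : MemLp (X i) 2 (P.restrict (Z ⁻¹' {k})) := (hX2 i).restrict _
    have h2 := h1.smul_measure (c := (P (Z ⁻¹' {k}))⁻¹)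
      (by simp [ENNReal.inv_ne_top, hP0 k])
    exact h2
  have hcoord : ∀ i k j, MemLp (fun ω => X i ω j) 2 (P[|Z ⁻¹' {k}]) := by
    intro i k j
    exact (ContinuousLinearMap.proj (R := ℝ) (φ := fun _ : Fin n => ℝ) j).comp_memLp'
      (hmemc i k)
  have hmdot : Measurable (fun v : Fin n → ℝ => m ⬝ᵥ v) := by
    simp only [dotProduct]
    exact Finset.measurable_sum _ fun j _ => (by fun_prop : Measurable fun v : Fin n → ℝ => m j * v j)
  have hdotmem : ∀ i k, MemLp (fun ω => m ⬝ᵥ X i ω) 2 (P[|Z ⁻¹' {k}]) := by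
    intro i k
    have h1 : (fun ω => m ⬝ᵥ X i ω) = fun ω => ∑ j, m j * X i ω j := by
      funext ω; rw [dotProduct]
    rw [h1]
    exact memLp_finset_sum _ fun j _ => (hcoord i k j).const_mul (m j)
  have hEdot : ∀ i k, (∫ ω, m ⬝ᵥ X i ω ∂(P[|Z ⁻¹' {k}])) = m ⬝ᵥ d k := by
    intro i k
    simp only [dotProduct]
    rw [integral_finset_sum _
      (fun j _ => ((hcoord i k j).const_mul (m j)).integrable one_le_two)]
    simp_rw [integral_const_mul, hmean i k]
  -- part 1, per component
  have key1 : ∀ k, Integrable (fun ω => (m ⬝ᵥ X 0 ω) * (m ⬝ᵥ X 1 ω)) (P[|Z ⁻¹' {k}]) ∧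
      (∫ ω, (m ⬝ᵥ X 0 ω) * (m ⬝ᵥ X 1 ω) ∂(P[|Z ⁻¹' {k}])) = (m ⬝ᵥ d k) ^ 2 := by
    intro k
    haveI : IsProbabilityMeasure (P[|Z ⁻¹' {k}]) := cond_isProbabilityMeasure (hP0 k)
    have hYind : iIndepFun
        (fun i => (fun v : Fin n → ℝ => m ⬝ᵥ v) ∘ X i) (P[|Z ⁻¹' {k}]) :=
      (hindep k).comp _ (fun _ => hmdot)
    have hInd : IndepFun ((fun v : Fin n → ℝ => m ⬝ᵥ v) ∘ X 0)
        ((fun v : Fin n → ℝ => m ⬝ᵥ v) ∘ X 1) (P[|Z ⁻¹' {k}]) :=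
      hYind.indepFun (by decide)
    have I0 := (hdotmem 0 k).integrable one_le_two
    have I1 := (hdotmem 1 k).integrable one_le_two
    constructor
    · exact hInd.integrable_mul I0 I1
    · have := hInd.integral_mul_eq_mul_integral I0.aestronglyMeasurable I1.aestronglyMeasurable
      calc (∫ ω, (m ⬝ᵥ X 0 ω) * (m ⬝ᵥ X 1 ω) ∂(P[|Z ⁻¹' {k}]))
          = (∫ ω, m ⬝ᵥ X 0 ω ∂(P[|Z ⁻¹' {k}])) * ∫ ω, m ⬝ᵥ X 1 ω ∂(P[|Z ⁻¹' {k}]) := this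
        _ = (m ⬝ᵥ d k) ^ 2 := by rw [hEdot 0 k, hEdot 1 k, sq]
  -- part 2, per component
  have key2 : ∀ (j : Fin n) k,
      Integrable (fun ω => (m ⬝ᵥ X 1 ω) * ((m ⬝ᵥ X 2 ω) - θ) * X 0 ω j) (P[|Z ⁻¹' {k}]) ∧
      (∫ ω, (m ⬝ᵥ X 1 ω) * ((m ⬝ᵥ X 2 ω) - θ) * X 0 ω j ∂(P[|Z ⁻¹' {k}])) =
        (m ⬝ᵥ d k) * ((m ⬝ᵥ d k) - θ) * d k j := by
    intro j k
    haveI : IsProbabilityMeasure (P[|Z ⁻¹' {k}]) := cond_isProbabilityMeasure (hP0 k)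
    set g : Fin 3 → (Fin n → ℝ) → ℝ := fun i =>
      if i = 0 then (fun v => v j) else if i = 1 then (fun v => m ⬝ᵥ v)
      else (fun v => m ⬝ᵥ v - θ) with hg
    have hgmeas : ∀ i, Measurable (g i) := by
      intro i
      fin_cases i
      · simpa [hg] using measurable_pi_apply j
      · simpa [hg] using hmdot
      · simpa [hg] using (show Measurable fun v : Fin n → ℝ => m ⬝ᵥ v - θ from hmdot.sub measurable_const)
    have hYind : iIndepFun
        (fun i => g i ∘ X i) (P[|Z ⁻¹' {k}]) := (hindep k).comp _ hgmeas
    have hYmeas : ∀ i, Measurable (g i ∘ X i) := fun i => (hgmeas i).comp (hXmeas i)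
    have I0 : Integrable (g 0 ∘ X 0) (P[|Z ⁻¹' {k}]) := by
      simpa [hg, Function.comp_def] using (hcoord 0 k j).integrable one_le_two
    have I1 : Integrable (g 1 ∘ X 1) (P[|Z ⁻¹' {k}]) := by
      simpa [hg, Function.comp_def] using (hdotmem 1 k).integrable one_le_two
    have I2 : Integrable (g 2 ∘ X 2) (P[|Z ⁻¹' {k}]) := by
      simpa [hg, Function.comp_def] using
        (show Integrable (fun ω => m ⬝ᵥ X 2 ω - θ) (P[|Z ⁻¹' {k}]) from
          ((hdotmem 2 k).integrable one_le_two).sub (integrable_const θ))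
    have hInd12 : IndepFun (g 1 ∘ X 1) (g 2 ∘ X 2) (P[|Z ⁻¹' {k}]) :=
      hYind.indepFun (by decide)
    have I12 : Integrable ((g 1 ∘ X 1) * (g 2 ∘ X 2)) (P[|Z ⁻¹' {k}]) :=
      hInd12.integrable_mul I1 I2
    have hIndm : IndepFun ((fun i => g i ∘ X i) 1 * (fun i => g i ∘ X i) 2)
        ((fun i => g i ∘ X i) 0) (P[|Z ⁻¹' {k}]) :=
      hYind.indepFun_mul_left hYmeas 1 2 0 (by decide) (by decide)
    have E0 : (∫ ω, (g 0 ∘ X 0) ω ∂(P[|Z ⁻¹' {k}])) = d k j := by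
      simpa [hg] using hmean 0 k j
    have E1 : (∫ ω, (g 1 ∘ X 1) ω ∂(P[|Z ⁻¹' {k}])) = m ⬝ᵥ d k := by
      simpa [hg] using hEdot 1 k
    have E2 : (∫ ω, (g 2 ∘ X 2) ω ∂(P[|Z ⁻¹' {k}])) = m ⬝ᵥ d k - θ := by
      have h := integral_sub ((hdotmem 2 k).integrable one_le_two)
        (integrable_const (μ := P[|Z ⁻¹' {k}]) θ)
      simpa [hg, Function.comp_def, hEdot 2 k] using h
    have E12 : (∫ ω, ((g 1 ∘ X 1) * (g 2 ∘ X 2)) ω ∂(P[|Z ⁻¹' {k}])) =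
        (m ⬝ᵥ d k) * (m ⬝ᵥ d k - θ) := by
      rw [hInd12.integral_mul_eq_mul_integral I1.aestronglyMeasurable I2.aestronglyMeasurable, E1, E2]
    have heq : (fun ω => (m ⬝ᵥ X 1 ω) * ((m ⬝ᵥ X 2 ω) - θ) * X 0 ω j) =
        ((g 1 ∘ X 1) * (g 2 ∘ X 2)) * (g 0 ∘ X 0) := by
      funext ω; simp [hg, Function.comp_def]
    constructor
    · rw [heq]
      exact hIndm.integrable_mul I12 I0
    · calc (∫ ω, (m ⬝ᵥ X 1 ω) * ((m ⬝ᵥ X 2 ω) - θ) * X 0 ω j ∂(P[|Z ⁻¹' {k}]))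
          = ∫ ω, (((g 1 ∘ X 1) * (g 2 ∘ X 2)) * (g 0 ∘ X 0)) ω ∂(P[|Z ⁻¹' {k}]) := by
            rw [heq]
        _ = (∫ ω, ((g 1 ∘ X 1) * (g 2 ∘ X 2)) ω ∂(P[|Z ⁻¹' {k}])) *
            ∫ ω, (g 0 ∘ X 0) ω ∂(P[|Z ⁻¹' {k}]) :=
            hIndm.integral_mul_eq_mul_integral I12.aestronglyMeasurable I0.aestronglyMeasurable
        _ = (m ⬝ᵥ d k) * ((m ⬝ᵥ d k) - θ) * d k j := by rw [E12, E0]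
  constructor
  · rw [decomp _ (fun k => (key1 k).1), hθ]
    exact Finset.sum_congr rfl fun k _ => by rw [(key1 k).2]
  · intro j
    rw [decomp _ (fun k => (key2 j k).1)]
    exact Finset.sum_congr rfl fun k _ => by rw [(key2 j k).2]
end
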